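/- arXiv:1301.6354 — 5 statements merged into one kernel-verified Lean document; each statement's English description precedes it below -/
import Mathlib

section
/- Let N ≥ 1, let b : ℝ^N → ℝ^N be continuously differentiable with bounded derivative, and let (φ_v)_{v∈ℝ} be its flow. Let m : ℝ^N → (0,∞) be a continuous, everywhere positive probability density with respect to Lebesgue measure λ^N, and set μ := m · λ^N. Then for every v ∈ ℝ the image measure μ ∘ φ_v^{-1} is absolutely continuous with respect to μ, with Radon–Nikodym density d(μ∘φ_v^{-1})/dμ(x) = (m(φ_{−v}(x))/m(x)) · exp( − ∫₀^v (div b)(φ_{−σ}(x)) dσ ) for λ^N-almost every x ∈ ℝ^N. -/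
set_option synthInstance.maxHeartbeats 1000000
set_option maxHeartbeats 1000000

open MeasureTheory Filter Topology

section Part1
open Matrix Finset
open Matrix Finset

variable {n : Type*} [Fintype n] [DecidableEq n]

lemma det_updateColumn_eq_sum (M M' : Matrix n n ℝ) (i : n) :
    (M.updateCol i (fun r => M' r i)).det
      = ∑ σ : Equiv.Perm n, (Equiv.Perm.sign σ : ℝ)
          * ((∏ j ∈ Finset.univ.erase i, M (σ j) j) * M' (σ i) i) := by
  rw [Matrix.det_apply']
  refine Finset.sum_congr rfl fun σ _ => ?_
  congr 1
  rw [← Finset.mul_prod_erase Finset.univ _ (Finset.mem_univ i), mul_comm]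
  congr 1
  · exact Finset.prod_congr rfl fun j hj => by
      rw [Matrix.updateCol_apply, if_neg (Finset.ne_of_mem_erase hj)]
  · rw [Matrix.updateCol_apply, if_pos rfl]

lemma sum_det_updateColumn (M M' : Matrix n n ℝ) :
    ∑ i, (M.updateCol i (fun r => M' r i)).det = Matrix.trace (M.adjugate * M') := by
  have h : ∀ i, (M.updateCol i (fun r => M' r i)).det
      = (M.adjugate *ᵥ (fun r => M' r i)) i := by
    intro i
    rw [← Matrix.cramer_eq_adjugate_mulVec, Matrix.cramer_apply]
  simp only [h]
  rw [Matrix.trace]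
  refine Finset.sum_congr rfl fun i _ => ?_
  simp [Matrix.mulVec, Matrix.diag, Matrix.mul_apply, dotProduct]

lemma trace_adjugate_mul_mul (M A : Matrix n n ℝ) :
    Matrix.trace (M.adjugate * (A * M)) = Matrix.trace A * M.det := by
  rw [Matrix.trace_mul_comm, Matrix.mul_assoc, Matrix.mul_adjugate,
    Matrix.mul_smul, Matrix.mul_one, Matrix.trace_smul, smul_eq_mul, mul_comm]

/-- Jacobi's formula along a path. -/
lemma hasDerivAt_det_path {f : ℝ → Matrix n n ℝ} {M' : Matrix n n ℝ} {t : ℝ}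
    (h : ∀ i j, HasDerivAt (fun s => f s i j) (M' i j) t) :
    HasDerivAt (fun s => (f s).det) (Matrix.trace ((f t).adjugate * M')) t := by
  have key : ∀ σ : Equiv.Perm n, HasDerivAt (fun s => (Equiv.Perm.sign σ : ℝ) * ∏ i, f s (σ i) i)
      ((Equiv.Perm.sign σ : ℝ) * ∑ i, (∏ j ∈ Finset.univ.erase i, f t (σ j) j) • M' (σ i) i) t :=
    fun σ => (HasDerivAt.fun_finsetProd (fun i _ => h (σ i) i)).const_mul _
  have sum : HasDerivAt (fun s => (f s).det)
      (∑ σ : Equiv.Perm n, (Equiv.Perm.sign σ : ℝ)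
        * ∑ i, (∏ j ∈ Finset.univ.erase i, f t (σ j) j) • M' (σ i) i) t := by
    simp only [Matrix.det_apply']
    exact HasDerivAt.fun_sum (fun σ (_ : σ ∈ Finset.univ) => key σ)
  convert sum using 1
  rw [← sum_det_updateColumn]
  simp only [det_updateColumn_eq_sum, smul_eq_mul, Finset.mul_sum]
  rw [Finset.sum_comm]
end Part1

section Part2
open MeasureTheory intervalIntegral Filter
open MeasureTheory intervalIntegral Filter

lemma integral_abs_pow (n : ℕ) (t : ℝ) :
    ∫ s in (0:ℝ)..t, |s| ^ n = t * |t| ^ n / (n + 1) := by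
  rcases le_or_gt 0 t with ht | ht
  · rw [intervalIntegral.integral_congr (g := fun s => s ^ n)
      (fun s hs => by rw [Set.uIcc_of_le ht] at hs; simp [abs_of_nonneg hs.1]),
      integral_pow, abs_of_nonneg ht]
    ring
  · rw [intervalIntegral.integral_congr (g := fun s => (-s) ^ n)
      (fun s hs => by rw [Set.uIcc_of_ge ht.le] at hs; simp [abs_of_nonpos hs.2]),
      intervalIntegral.integral_comp_neg (fun s => s ^ n), integral_pow, abs_of_neg ht]
    have h0 : (-(0:ℝ)) ^ (n + 1) = 0 := by norm_num
    rw [h0]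
    ring

lemma mem_uIoc_abs {t s : ℝ} (hs : s ∈ Set.uIoc 0 t) : |s| ≤ |t| := by
  rcases le_total 0 t with h | h
  · rw [Set.uIoc_of_le h] at hs
    rw [abs_of_pos hs.1, abs_of_nonneg h]; exact hs.2
  · rw [Set.uIoc_of_ge h] at hs
    rw [abs_of_nonpos hs.2, abs_of_nonpos h]; linarith [hs.1]

variable {E : Type*} [NormedAddCommGroup E] [NormedSpace ℝ E] [CompleteSpace E]

lemma exists_linear_ode (A : ℝ → E →L[ℝ] E) (hA : Continuous A)
    (C : ℝ) (hC : ∀ t, ‖A t‖ ≤ C) :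
    ∃ L : ℝ → E →L[ℝ] E, L 0 = 1 ∧ Continuous L ∧
      ∀ t, HasDerivAt L ((A t).comp (L t)) t := by
  have hC0 : 0 ≤ C := le_trans (norm_nonneg _) (hC 0)
  let P : ℕ → ℝ → E →L[ℝ] E := fun n =>
    n.rec (fun _ => 1) (fun _ Pn t => ∫ s in (0:ℝ)..t, (A s).comp (Pn s))
  have hP0 : ∀ t, P 0 t = 1 := fun _ => rfl
  have hPs : ∀ n t, P (n + 1) t = ∫ s in (0:ℝ)..t, (A s).comp (P n s) := fun _ _ => rfl
  have hPc : ∀ n, Continuous (P n) := by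
    intro n; induction n with
    | zero => exact continuous_const
    | succ n ih =>
      exact intervalIntegral.continuous_primitive
        (fun a b => ((hA.clm_comp ih).intervalIntegrable a b)) 0
  have hPb : ∀ n t, ‖P n t‖ ≤ (C * |t|) ^ n / n.factorial := by
    intro n; induction n with
    | zero => intro t; rw [hP0, pow_zero, Nat.factorial_zero, Nat.cast_one, div_one]; exact ContinuousLinearMap.norm_id_le
    | succ n ih =>
      intro t
      have hbound : ∀ᵐ s ∂(volume.restrict (Set.uIoc 0 t)),
          ‖(A s).comp (P n s)‖ ≤ C ^ (n+1) / n.factorial * |s| ^ n := by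
        refine ae_of_all _ fun s => ?_
        refine le_trans (ContinuousLinearMap.opNorm_comp_le _ _) ?_
        refine le_trans (mul_le_mul (hC s) (ih s) (norm_nonneg _) hC0) (le_of_eq ?_)
        rw [mul_pow]; ring
      have g_int : IntervalIntegrable (fun s => C ^ (n+1) / n.factorial * |s| ^ n)
          volume 0 t :=
        (continuous_const.mul (continuous_abs.pow n)).intervalIntegrable 0 t
      have key := intervalIntegral.norm_integral_le_abs_of_norm_le hbound g_int
      rw [intervalIntegral.integral_const_mul, integral_abs_pow] at key
      rw [hPs]
      refine le_trans key (le_of_eq ?_)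
      have hfac : (0:ℝ) < (n.factorial : ℝ) := by positivity
      have hn1 : (0:ℝ) < (n:ℝ) + 1 := by positivity
      simp only [abs_mul, abs_div, abs_pow, abs_abs, Nat.abs_cast]
      rw [abs_of_nonneg hC0, abs_of_nonneg hn1.le, mul_pow, Nat.factorial_succ]
      push_cast
      field_simp
      ring
  have hsum : ∀ t, Summable fun n => P n t := fun t =>
    Summable.of_norm (Summable.of_nonneg_of_le (fun n => norm_nonneg _)
      (fun n => hPb n t) (Real.summable_pow_div_factorial (C * |t|)))
  set L : ℝ → E →L[ℝ] E := fun t => ∑' n, P n t with hLdef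
  have hL0 : L 0 = 1 := by
    rw [hLdef]
    simp only
    rw [tsum_eq_single 0 (fun n hn => ?_)]
    · exact hP0 0
    · match n, hn with
      | n+1, _ => rw [hPs, intervalIntegral.integral_same]
  have hbived : ∀ (T : ℝ) (n : ℕ) (t : ℝ), t ∈ Set.Icc (-T) T →
      ‖P n t‖ ≤ (C * T) ^ n / n.factorial := by
    intro T n t ht
    refine le_trans (hPb n t) ?_
    have habs : |t| ≤ T := abs_le.mpr ⟨ht.1, ht.2⟩
    have h1 : (C * |t|) ^ n ≤ (C * T) ^ n :=
      pow_le_pow_left₀ (mul_nonneg hC0 (abs_nonneg t))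
        (mul_le_mul_of_nonneg_left habs hC0) n
    have hfac : (0:ℝ) < (n.factorial : ℝ) := by positivity
    exact (div_le_div_iff_of_pos_right hfac).mpr h1
  have hLcOn : ∀ T : ℝ, ContinuousOn L (Set.Icc (-T) T) :=
    fun T => continuousOn_tsum (fun n => (hPc n).continuousOn)
      (Real.summable_pow_div_factorial (C * T)) (hbived T)
  have hLc : Continuous L := by
    rw [continuous_iff_continuousAt]
    intro t
    have hmem : Set.Icc (-(|t| + 1)) (|t| + 1) ∈ nhds t :=
      Icc_mem_nhds (by linarith [neg_abs_le t]) (by linarith [le_abs_self t])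
    exact (hLcOn (|t| + 1)).continuousAt hmem
  have hAL_cont : Continuous fun s => (A s).comp (L s) := hA.clm_comp hLc
  have hint : ∀ t, L t = 1 + ∫ s in (0:ℝ)..t, (A s).comp (L s) := by
    intro t
    set S : ℕ → ℝ → E →L[ℝ] E := fun N t => ∑ n ∈ Finset.range N, P n t with hSdef
    have hScont : ∀ N, Continuous (S N) :=
      fun N => continuous_finset_sum _ (fun n _ => hPc n)
    have hSrec : ∀ N, 1 + (∫ s in (0:ℝ)..t, (A s).comp (S N s)) = S (N + 1) t := by
      intro N
      have hcomp : (fun s => (A s).comp (S N s))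
          = fun s => ∑ n ∈ Finset.range N, (A s).comp (P n s) := by
        funext s; ext v
        simp [hSdef, ContinuousLinearMap.sum_apply, map_sum]
      rw [hcomp, intervalIntegral.integral_finset_sum
        (fun n _ => (hA.clm_comp (hPc n)).intervalIntegrable _ _)]
      rw [hSdef]
      simp only
      rw [Finset.sum_range_succ']
      simp only [hPs, hP0]
      rw [add_comm]
    have h1 : Tendsto (fun N => S (N + 1) t) atTop (nhds (L t)) :=
      ((hsum t).hasSum.tendsto_sum_nat).comp (tendsto_add_atTop_nat 1)
    have hTU := tendstoUniformlyOn_tsum_nat (Real.summable_pow_div_factorial (C * |t|))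
      (hbived |t|)
    have h2 : Tendsto (fun N => ∫ s in (0:ℝ)..t, (A s).comp (S N s)) atTop
        (nhds (∫ s in (0:ℝ)..t, (A s).comp (L s))) := by
      rw [Metric.tendsto_atTop]
      intro ε hε
      have hδ : (0:ℝ) < ε / (C * |t| + 1) := by positivity
      rw [Metric.tendstoUniformlyOn_iff] at hTU
      have hev := hTU (ε / (C * |t| + 1)) hδ
      rw [Filter.eventually_atTop] at hev
      obtain ⟨N₀, hN₀⟩ := hev
      refine ⟨N₀, fun N hN => ?_⟩
      have hSint : IntervalIntegrable (fun s => (A s).comp (S N s)) volume 0 t :=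
        (hA.clm_comp (hScont N)).intervalIntegrable _ _
      rw [dist_eq_norm, ← intervalIntegral.integral_sub hSint
        (hAL_cont.intervalIntegrable _ _)]
      have hb2 : ∀ s ∈ Set.uIoc 0 t,
          ‖(A s).comp (S N s) - (A s).comp (L s)‖ ≤ C * (ε / (C * |t| + 1)) := by
        intro s hs
        have habs := mem_uIoc_abs hs
        have hmem : s ∈ Set.Icc (-|t|) |t| :=
          ⟨by linarith [neg_abs_le s], by linarith [le_abs_self s]⟩
        have hdist := hN₀ N hN s hmem
        rw [dist_eq_norm] at hdist
        have hsub : (A s).comp (S N s) - (A s).comp (L s)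
            = (A s).comp (S N s - L s) := by ext v; simp
        rw [hsub]
        refine le_trans (ContinuousLinearMap.opNorm_comp_le _ _) ?_
        refine mul_le_mul (hC s) ?_ (norm_nonneg _) hC0
        rw [← norm_neg]
        simpa using hdist.le
      refine lt_of_le_of_lt (intervalIntegral.norm_integral_le_of_norm_le_const hb2) ?_
      have hlt : C * (ε / (C * |t| + 1)) * |t - 0| < ε := by
        rw [sub_zero]
        have h1 : C * (ε / (C * |t| + 1)) * |t| = (C * |t|) * (ε / (C * |t| + 1)) := by ring
        rw [h1]
        calc (C * |t|) * (ε / (C * |t| + 1))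
            < (C * |t| + 1) * (ε / (C * |t| + 1)) := by
              apply mul_lt_mul_of_pos_right _ hδ; linarith
          _ = ε := by field_simp
      exact hlt
    have h2' : Tendsto (fun N => 1 + ∫ s in (0:ℝ)..t, (A s).comp (S N s)) atTop
        (nhds (1 + ∫ s in (0:ℝ)..t, (A s).comp (L s))) := h2.const_add 1
    exact (tendsto_nhds_unique (h2'.congr (fun N => hSrec N)) h1).symm
  refine ⟨L, hL0, hLc, fun t => ?_⟩
  have hprim : HasDerivAt (fun u => ∫ s in (0:ℝ)..u, (A s).comp (L s))
      ((A t).comp (L t)) t :=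
    intervalIntegral.integral_hasDerivAt_right (hAL_cont.intervalIntegrable _ _)
      (hAL_cont.stronglyMeasurableAtFilter _ _) hAL_cont.continuousAt
  exact (hprim.const_add 1).congr_of_eventuallyEq (Filter.Eventually.of_forall hint)
end Part2

section Part3
variable {E : Type*} [NormedAddCommGroup E] [NormedSpace ℝ E] [FiniteDimensional ℝ E]

lemma det_of_linear_ode (A : ℝ → E →L[ℝ] E) (hA : Continuous A)
    (L : ℝ → E →L[ℝ] E) (hL0 : L 0 = 1)
    (hL : ∀ t, HasDerivAt L ((A t).comp (L t)) t) (t : ℝ) :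
    (L t).det = Real.exp (∫ s in (0:ℝ)..t, LinearMap.trace ℝ E (A s : E →ₗ[ℝ] E)) := by
  classical
  set bE := Module.finBasis ℝ E with hbE
  set D : ℝ → Matrix (Fin (Module.finrank ℝ E)) (Fin (Module.finrank ℝ E)) ℝ :=
    fun s => LinearMap.toMatrix bE bE (L s : E →ₗ[ℝ] E) with hD
  set Am : ℝ → Matrix (Fin (Module.finrank ℝ E)) (Fin (Module.finrank ℝ E)) ℝ :=
    fun s => LinearMap.toMatrix bE bE (A s : E →ₗ[ℝ] E) with hAm
  set τ : ℝ → ℝ := fun s => LinearMap.trace ℝ E (A s : E →ₗ[ℝ] E) with hτ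
  -- derivative of matrix entries
  have hentry : ∀ (u : ℝ) i j, HasDerivAt (fun s => D s i j) ((Am u * D u) i j) u := by
    intro u i j
    have hv : HasDerivAt (fun s => L s (bE j)) (((A u).comp (L u)) (bE j)) u := by
      have h0 := (hL u).clm_apply (hasDerivAt_const u (bE j))
      simpa using h0
    have hco := (LinearMap.toContinuousLinearMap (bE.coord i)).hasFDerivAt.comp_hasDerivAt u hv
    have heq : (fun s => (LinearMap.toContinuousLinearMap (bE.coord i)) (L s (bE j)))
        = fun s => D s i j := by
      funext s
      simp [hD, LinearMap.toMatrix_apply, Module.Basis.coord_apply]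
    have hco' : HasDerivAt (fun s => (LinearMap.toContinuousLinearMap (bE.coord i)) ((L s) (bE j)))
        ((LinearMap.toContinuousLinearMap (bE.coord i)) (((A u).comp (L u)) (bE j))) u := hco
    rw [heq] at hco'
    convert hco' using 1
    have : (Am u * D u) i j
        = LinearMap.toMatrix bE bE (((A u).comp (L u) : E →L[ℝ] E) : E →ₗ[ℝ] E) i j := by
      rw [hAm, hD, ContinuousLinearMap.toLinearMap_comp, LinearMap.toMatrix_comp bE bE bE]
    rw [this]
    simp [LinearMap.toMatrix_apply, Module.Basis.coord_apply]
  -- derivative of det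
  have hdet : ∀ u, HasDerivAt (fun s => (D s).det) (τ u * (D u).det) u := by
    intro u
    have h := hasDerivAt_det_path (hentry u)
    rw [trace_adjugate_mul_mul] at h
    have htr : Matrix.trace (Am u) = τ u :=
      (LinearMap.trace_eq_matrix_trace ℝ bE _).symm
    rwa [htr] at h
  -- continuity of τ
  have hτc : Continuous τ := by
    have : τ = fun s => ((LinearMap.trace ℝ E).comp
        (ContinuousLinearMap.coeLM ℝ)) (A s) := rfl
    rw [this]
    exact (LinearMap.continuous_of_finiteDimensional _).comp hA
  have hI : ∀ u : ℝ, HasDerivAt (fun w => ∫ s in (0:ℝ)..w, τ s) (τ u) u := fun u =>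
    intervalIntegral.integral_hasDerivAt_right (hτc.intervalIntegrable _ _)
      (hτc.stronglyMeasurableAtFilter _ _) hτc.continuousAt
  set g : ℝ → ℝ := fun u => (D u).det * Real.exp (-(∫ s in (0:ℝ)..u, τ s)) with hg
  have hg' : ∀ u, HasDerivAt g 0 u := by
    intro u
    have he : HasDerivAt (fun w => Real.exp (-(∫ s in (0:ℝ)..w, τ s)))
        (Real.exp (-(∫ s in (0:ℝ)..u, τ s)) * (-τ u)) u := (hI u).neg.exp
    have := (hdet u).fun_mul he
    refine this.congr_deriv ?_
    ring
  have hconst := is_const_of_deriv_eq_zero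
    (fun u => (hg' u).differentiableAt) (fun u => (hg' u).deriv)
  have hg0 : g 0 = 1 := by
    rw [hg]
    simp only [intervalIntegral.integral_same, neg_zero, Real.exp_zero, mul_one]
    rw [hD]
    simp only [hL0]
    rw [show ((1 : E →L[ℝ] E) : E →ₗ[ℝ] E) = LinearMap.id from rfl, LinearMap.toMatrix_id]
    exact Matrix.det_one
  have hgt : (D t).det * Real.exp (-(∫ s in (0:ℝ)..t, τ s)) = 1 := by
    have := hconst t 0
    rw [hg0] at this
    exact this
  have hdetL : (D t).det = (L t).det := LinearMap.det_toMatrix bE _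
  rw [← hdetL]
  rw [Real.exp_neg] at hgt
  have hexp := Real.exp_ne_zero (∫ s in (0:ℝ)..t, τ s)
  field_simp at hgt
  exact hgt
end Part3

section Part4
open Set Filter Metric


variable {E : Type*} [NormedAddCommGroup E] [NormedSpace ℝ E] [FiniteDimensional ℝ E]

lemma gronwallBound_zero_linear (K v : ℝ) (ε : ℝ) :
    gronwallBound 0 K ε v = ε * gronwallBound 0 K 1 v := by
  rcases eq_or_ne K 0 with h | h
  · subst h; rw [gronwallBound_K0, gronwallBound_K0]; ring
  · rw [gronwallBound_of_K_ne_0 h, gronwallBound_of_K_ne_0 h]; ring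

lemma gronwallBound_zero_nonneg {K v : ℝ} (hK : 0 ≤ K) (hv : 0 ≤ v) :
    0 ≤ gronwallBound 0 K 1 v := by
  rcases eq_or_ne K 0 with h | h
  · subst h; rw [gronwallBound_K0]
    show (0:ℝ) ≤ 0 + 1 * v
    linarith
  · rw [gronwallBound_of_K_ne_0 h]
    have hKpos : 0 < K := lt_of_le_of_ne hK (Ne.symm h)
    have : (1:ℝ) ≤ Real.exp (K * v) := Real.one_le_exp (by positivity)
    have h2 : 0 ≤ Real.exp (K * v) - 1 := by linarith
    positivity

lemma flow_hasFDerivAt_nonneg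
    (b : E → E) (hb : ContDiff ℝ 1 b) (C : ℝ) (hC : ∀ y, ‖fderiv ℝ b y‖ ≤ C)
    (φ : ℝ → E → E) (hφ0 : ∀ y, φ 0 y = y)
    (hφ' : ∀ (v : ℝ) (y : E), HasDerivAt (fun t => φ t y) (b (φ v y)) v)
    (x : E) (v : ℝ) (hv : 0 ≤ v)
    (L : ℝ → E →L[ℝ] E) (hL0 : L 0 = 1)
    (hL : ∀ t, HasDerivAt L ((fderiv ℝ b (φ t x)).comp (L t)) t) :
    HasFDerivAt (φ v) (L v) x := by
  classical
  set K : ℝ := max C 0 with hK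
  have hK0 : 0 ≤ K := le_max_right _ _
  have hCK : ∀ y, ‖fderiv ℝ b y‖ ≤ K := fun y => le_trans (hC y) (le_max_left _ _)
  have hbd : Differentiable ℝ b := hb.differentiable one_ne_zero
  have hlip : LipschitzWith K.toNNReal b := by
    apply lipschitzWith_of_nnnorm_fderiv_le hbd
    intro y
    rw [← NNReal.coe_le_coe, coe_nnnorm, Real.coe_toNNReal _ hK0]
    exact hCK y
  have hKcoe : (K.toNNReal : ℝ) = K := Real.coe_toNNReal _ hK0
  -- continuity of trajectories
  have htrajc : ∀ y, Continuous fun t => φ t y := by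
    intro y
    rw [continuous_iff_continuousAt]
    exact fun t => (hφ' t y).continuousAt
  -- Gronwall distance estimate on [0, v]
  have hgron : ∀ (y z : E) (t : ℝ), t ∈ Icc 0 v →
      dist (φ t y) (φ t z) ≤ dist y z * Real.exp (K * t) := by
    intro y z t ht
    have h := dist_le_of_trajectories_ODE (v := fun _ => b) (K := K.toNNReal)
      (f := fun t => φ t y) (g := fun t => φ t z) (a := 0) (b := v)
      (δ := dist y z)
      (fun _ => hlip) ((htrajc y).continuousOn)
      (fun s _ => (hφ' s y).hasDerivWithinAt) ((htrajc z).continuousOn)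
      (fun s _ => (hφ' s z).hasDerivWithinAt)
      (by rw [hφ0, hφ0])
      t ht
    rw [hKcoe, sub_zero] at h
    exact h
  -- compact tube around the trajectory
  set traj : Set E := (fun t => φ t x) '' Icc 0 v with htraj
  have htrajcmp : IsCompact traj := (isCompact_Icc).image (htrajc x)
  set tube : Set E := Metric.cthickening 1 traj with htube
  have htube_cmp : IsCompact tube := htrajcmp.cthickening
  have hDbc : Continuous (fderiv ℝ b) := hb.continuous_fderiv one_ne_zero
  have hUC : UniformContinuousOn (fderiv ℝ b) tube :=
    htube_cmp.uniformContinuousOn_of_continuous hDbc.continuousOn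
  rw [hasFDerivAt_iff_isLittleO_nhds_zero, Asymptotics.isLittleO_iff]
  intro c hc
  set B : ℝ := gronwallBound 0 K 1 (v - 0) with hB
  have hB0 : 0 ≤ B := by rw [hB, sub_zero]; exact gronwallBound_zero_nonneg hK0 hv
  set ε : ℝ := c / (Real.exp (K * v) * B + 1) with hε
  have hεpos : 0 < ε := by
    apply div_pos hc
    have : 0 ≤ Real.exp (K * v) * B := mul_nonneg (Real.exp_pos _).le hB0
    linarith
  rw [Metric.uniformContinuousOn_iff] at hUC
  obtain ⟨δ, hδpos, hδ⟩ := hUC ε hεpos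
  set r : ℝ := min δ 1 / (2 * Real.exp (K * v)) with hr
  have hrpos : 0 < r := by positivity
  filter_upwards [Metric.ball_mem_nhds (0 : E) hrpos] with h hh
  rw [mem_ball_zero_iff] at hh
  -- the remainder function
  set R : ℝ → E := fun t => φ t (x + h) - φ t x - L t h with hR
  have hdistyz : ∀ t ∈ Icc (0:ℝ) v, ‖φ t (x + h) - φ t x‖ ≤ ‖h‖ * Real.exp (K * v) := by
    intro t ht
    rw [← dist_eq_norm]
    refine le_trans (hgron (x + h) x t ht) ?_
    have h1 : dist (x + h) x = ‖h‖ := by rw [dist_eq_norm]; simp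
    rw [h1]
    have : Real.exp (K * t) ≤ Real.exp (K * v) :=
      Real.exp_le_exp.mpr (mul_le_mul_of_nonneg_left ht.2 hK0)
    exact mul_le_mul_of_nonneg_left this (norm_nonneg h)
  have hsmall : ‖h‖ * Real.exp (K * v) ≤ min δ 1 / 2 := by
    rw [hr] at hh
    have hexp : 0 < Real.exp (K * v) := Real.exp_pos _
    calc ‖h‖ * Real.exp (K * v) ≤ (min δ 1 / (2 * Real.exp (K * v))) * Real.exp (K * v) :=
          mul_le_mul_of_nonneg_right hh.le hexp.le
      _ = min δ 1 / 2 := by field_simp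
  -- derivative of R
  have hRd : ∀ t, HasDerivAt R
      (b (φ t (x + h)) - b (φ t x) - (fderiv ℝ b (φ t x)) (L t h)) t := by
    intro t
    have h1 := (hφ' t (x + h)).sub (hφ' t x)
    have h2 : HasDerivAt (fun t => L t h) ((fderiv ℝ b (φ t x)) (L t h)) t := by
      have := (hL t).clm_apply (hasDerivAt_const t h)
      simpa using this
    exact h1.sub h2
  have hRcont : ContinuousOn R (Icc 0 v) :=
    (Continuous.continuousOn (by
      have : Continuous fun t => L t h := by
        have hLc : Continuous L := by
          rw [continuous_iff_continuousAt]; exact fun t => (hL t).continuousAt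
        exact (ContinuousLinearMap.apply ℝ E h).continuous.comp hLc
      exact ((htrajc (x + h)).sub (htrajc x)).sub this))
  -- bound on the derivative
  have hbound : ∀ t ∈ Ico (0:ℝ) v, ‖b (φ t (x + h)) - b (φ t x)
      - (fderiv ℝ b (φ t x)) (L t h)‖ ≤ K * ‖R t‖ + ε * (‖h‖ * Real.exp (K * v)) := by
    intro t ht
    have htIcc : t ∈ Icc (0:ℝ) v := ⟨ht.1, ht.2.le⟩
    set z := φ t x with hz
    set y := φ t (x + h) with hy
    have hznorm : ‖y - z‖ ≤ ‖h‖ * Real.exp (K * v) := hdistyz t htIcc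
    have hzsmall : ‖y - z‖ ≤ min δ 1 / 2 := le_trans hznorm hsmall
    have hztraj : z ∈ traj := ⟨t, htIcc, rfl⟩
    have hball_tube : Metric.closedBall z ‖y - z‖ ⊆ tube := by
      intro w hw
      rw [Metric.mem_closedBall] at hw
      apply Metric.mem_cthickening_of_dist_le w z 1 _ hztraj
      refine le_trans hw (le_trans hzsmall ?_)
      have : min δ 1 ≤ 1 := min_le_right _ _
      linarith
    -- mean value inequality
    have hUCbound : ∀ w ∈ Metric.closedBall z ‖y - z‖,
        ‖fderiv ℝ b w - fderiv ℝ b z‖ ≤ ε := by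
      intro w hw
      have hwt : w ∈ tube := hball_tube hw
      have hzt : z ∈ tube := hball_tube (Metric.mem_closedBall_self (norm_nonneg _))
      rw [Metric.mem_closedBall] at hw
      have hwz : dist w z < δ := by
        refine lt_of_le_of_lt (le_trans hw hzsmall) ?_
        have h1 : min δ 1 ≤ δ := min_le_left _ _
        linarith
      have hd := hδ w hwt z hzt hwz
      rw [dist_eq_norm] at hd
      exact hd.le
    have hmvt := Convex.norm_image_sub_le_of_norm_hasFDerivWithin_le'
      (f := b) (s := Metric.closedBall z ‖y - z‖) (f' := fun w => fderiv ℝ b w)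
      (φ := fderiv ℝ b z) (C := ε)
      (fun w _ => (hbd w).hasFDerivAt.hasFDerivWithinAt)
      hUCbound (convex_closedBall z ‖y - z‖) (Metric.mem_closedBall_self (norm_nonneg _))
      (by rw [Metric.mem_closedBall, dist_eq_norm])
    have hdecomp : b y - b z - (fderiv ℝ b z) (L t h)
        = (b y - b z - (fderiv ℝ b z) (y - z)) + (fderiv ℝ b z) (R t) := by
      have hRt : R t = (y - z) - L t h := rfl
      have hmap : (fderiv ℝ b z) (R t)
          = (fderiv ℝ b z) (y - z) - (fderiv ℝ b z) (L t h) := by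
        rw [hRt, map_sub]
      rw [hmap]
      abel
    rw [hdecomp]
    refine le_trans (norm_add_le _ _) ?_
    have h2 : ‖(fderiv ℝ b z) (R t)‖ ≤ K * ‖R t‖ :=
      le_trans ((fderiv ℝ b z).le_opNorm _)
        (mul_le_mul_of_nonneg_right (hCK z) (norm_nonneg _))
    have h3 : ε * ‖y - z‖ ≤ ε * (‖h‖ * Real.exp (K * v)) :=
      mul_le_mul_of_nonneg_left hznorm hεpos.le
    linarith [hmvt]
  -- Gronwall
  have hgb := norm_le_gronwallBound_of_norm_deriv_right_le
    (f := R) (f' := fun t => b (φ t (x + h)) - b (φ t x) - (fderiv ℝ b (φ t x)) (L t h))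
    (δ := 0) (K := K) (ε := ε * (‖h‖ * Real.exp (K * v)))
    hRcont (fun t _ => (hRd t).hasDerivWithinAt)
    (by rw [hR]; simp [hφ0, hL0]) hbound v ⟨hv, le_refl v⟩
  rw [gronwallBound_zero_linear] at hgb
  have hfinal : ε * (Real.exp (K * v) * B) ≤ c := by
    have h1 : (0:ℝ) < Real.exp (K * v) * B + 1 := by
      have : 0 ≤ Real.exp (K * v) * B := mul_nonneg (Real.exp_pos _).le hB0
      linarith
    rw [hε, div_mul_eq_mul_div, div_le_iff₀ h1]
    nlinarith [mul_nonneg hc.le (mul_nonneg (Real.exp_pos (K * v)).le hB0)]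
  show ‖R v‖ ≤ c * ‖h‖
  calc ‖R v‖ ≤ ε * (‖h‖ * Real.exp (K * v)) * B := hgb
    _ = (ε * (Real.exp (K * v) * B)) * ‖h‖ := by ring
    _ ≤ c * ‖h‖ := mul_le_mul_of_nonneg_right hfinal (norm_nonneg h)
end Part4

section Part5
open Set Filter Metric

variable {E : Type*} [NormedAddCommGroup E] [NormedSpace ℝ E] [FiniteDimensional ℝ E]

section Unique

lemma ode_unique_nonneg (b : E → E) (K : NNReal) (hlip : LipschitzWith K b)
    (f g : ℝ → E) (hf : ∀ t, HasDerivAt f (b (f t)) t)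
    (hg : ∀ t, HasDerivAt g (b (g t)) t) (h0 : f 0 = g 0) (t : ℝ) (ht : 0 ≤ t) :
    f t = g t := by
  have hfc : ContinuousOn f (Icc 0 t) := by
    apply Continuous.continuousOn
    rw [continuous_iff_continuousAt]; exact fun s => (hf s).continuousAt
  have hgc : ContinuousOn g (Icc 0 t) := by
    apply Continuous.continuousOn
    rw [continuous_iff_continuousAt]; exact fun s => (hg s).continuousAt
  exact ODE_solution_unique (v := fun _ => b) (fun _ => hlip) hfc
    (fun s _ => (hf s).hasDerivWithinAt) hgc
    (fun s _ => (hg s).hasDerivWithinAt) h0 ⟨ht, le_refl t⟩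

lemma neg_lipschitz (b : E → E) (K : NNReal) (hlip : LipschitzWith K b) :
    LipschitzWith K (fun y => -(b y)) := by
  intro x y
  rw [edist_neg_neg]
  exact hlip x y

lemma ode_unique (b : E → E) (K : NNReal) (hlip : LipschitzWith K b)
    (f g : ℝ → E) (hf : ∀ t, HasDerivAt f (b (f t)) t)
    (hg : ∀ t, HasDerivAt g (b (g t)) t) (h0 : f 0 = g 0) (t : ℝ) :
    f t = g t := by
  rcases le_or_gt 0 t with ht | ht
  · exact ode_unique_nonneg b K hlip f g hf hg h0 t ht
  · have hF : ∀ s, HasDerivAt (fun u => f (-u)) ((fun y => -(b y)) (f (-s))) s := by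
      intro s
      have := (hf (-s)).scomp s (hasDerivAt_neg s)
      simpa [Function.comp_def] using this
    have hG : ∀ s, HasDerivAt (fun u => g (-u)) ((fun y => -(b y)) (g (-s))) s := by
      intro s
      have := (hg (-s)).scomp s (hasDerivAt_neg s)
      simpa [Function.comp_def] using this
    have := ode_unique_nonneg (fun y => -(b y)) K (neg_lipschitz b K hlip)
      (fun u => f (-u)) (fun u => g (-u)) hF hG (by simpa using h0) (-t) (by linarith)
    simpa using this

end Unique

section FlowProps

variable (b : E → E) (hb : ContDiff ℝ 1 b) (C : ℝ) (hC : ∀ y, ‖fderiv ℝ b y‖ ≤ C)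
  (φ : ℝ → E → E) (hφ0 : ∀ y, φ 0 y = y)
  (hφ' : ∀ (v : ℝ) (y : E), HasDerivAt (fun t => φ t y) (b (φ v y)) v)

include hb hC hφ0 hφ'

lemma flow_lipschitzWith : LipschitzWith (max C 0).toNNReal b := by
  apply lipschitzWith_of_nnnorm_fderiv_le (hb.differentiable one_ne_zero)
  intro y
  rw [← NNReal.coe_le_coe, coe_nnnorm, Real.coe_toNNReal _ (le_max_right C 0)]
  exact le_trans (hC y) (le_max_left _ _)

lemma flow_add (u v : ℝ) (x : E) : φ u (φ v x) = φ (u + v) x := by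
  have hlip := flow_lipschitzWith b hb C hC φ hφ0 hφ'
  have hf : ∀ t, HasDerivAt (fun s => φ s (φ v x)) (b (φ t (φ v x))) t :=
    fun t => hφ' t (φ v x)
  have hg : ∀ t, HasDerivAt (fun s => φ (s + v) x) (b (φ (t + v) x)) t := by
    intro t
    have := (hφ' (t + v) x).scomp t ((hasDerivAt_id t).add_const v)
    simpa [Function.comp_def] using this
  have h0 : φ 0 (φ v x) = φ (0 + v) x := by rw [hφ0, zero_add]
  exact ode_unique b _ hlip _ _ hf hg h0 u

lemma flow_left_inv (v : ℝ) (x : E) : φ (-v) (φ v x) = x := by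
  rw [flow_add b hb C hC φ hφ0 hφ', neg_add_cancel, hφ0]

lemma flow_dist_le_nonneg (T : ℝ) (hT : 0 ≤ T) (t : ℝ) (ht : t ∈ Icc 0 T) (x y : E) :
    dist (φ t x) (φ t y) ≤ dist x y * Real.exp (max C 0 * T) := by
  have hlip := flow_lipschitzWith b hb C hC φ hφ0 hφ'
  have hcx : ∀ z : E, Continuous fun s => φ s z := by
    intro z
    rw [continuous_iff_continuousAt]; exact fun s => (hφ' s z).continuousAt
  have h := dist_le_of_trajectories_ODE (v := fun _ => b) (K := (max C 0).toNNReal)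
    (f := fun s => φ s x) (g := fun s => φ s y) (a := 0) (b := T) (δ := dist x y)
    (fun _ => hlip) ((hcx x).continuousOn) (fun s _ => (hφ' s x).hasDerivWithinAt)
    ((hcx y).continuousOn) (fun s _ => (hφ' s y).hasDerivWithinAt)
    (by rw [hφ0, hφ0]) t ht
  rw [Real.coe_toNNReal _ (le_max_right C 0), sub_zero] at h
  refine le_trans h ?_
  have : Real.exp (max C 0 * t) ≤ Real.exp (max C 0 * T) :=
    Real.exp_le_exp.mpr (mul_le_mul_of_nonneg_left ht.2 (le_max_right C 0))
  exact mul_le_mul_of_nonneg_left this dist_nonneg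

lemma flow_rev_props :
    ContDiff ℝ 1 (fun y => -(b y)) ∧
    (∀ y, ‖fderiv ℝ (fun y => -(b y)) y‖ ≤ C) ∧
    (∀ y, (fun t => φ (-t) y) 0 = y) ∧
    (∀ (v : ℝ) (y : E), HasDerivAt (fun t => φ (-t) y)
      ((fun y => -(b y)) (φ (-v) y)) v) := by
  refine ⟨hb.neg, ?_, fun y => by simp [hφ0], ?_⟩
  · intro y
    have : fderiv ℝ (fun y => -(b y)) y = -fderiv ℝ b y := fderiv_neg
    rw [this, norm_neg]
    exact hC y
  · intro v y
    have := (hφ' (-v) y).scomp v (hasDerivAt_neg v)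
    simpa [Function.comp_def] using this

lemma flow_dist_le (T : ℝ) (t : ℝ) (ht : t ∈ Icc (-T) T) (x y : E) :
    dist (φ t x) (φ t y) ≤ dist x y * Real.exp (max C 0 * T) := by
  have hT : 0 ≤ T := by
    rcases ht with ⟨h1, h2⟩; linarith
  rcases le_or_gt 0 t with h | h
  · exact flow_dist_le_nonneg b hb C hC φ hφ0 hφ' T hT t ⟨h, ht.2⟩ x y
  · obtain ⟨hb2, hC2, hψ0, hψ'⟩ := flow_rev_props b hb C hC φ hφ0 hφ'
    have key := flow_dist_le_nonneg (fun y => -(b y)) hb2 C hC2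
      (fun t y => φ (-t) y) hψ0 hψ' T hT (-t) ⟨by linarith, by linarith [ht.1]⟩ x y
    have hmax : max C 0 = max C 0 := rfl
    simpa using key

lemma flow_joint_continuous : Continuous fun p : ℝ × E => φ p.1 p.2 := by
  rw [Metric.continuous_iff]
  rintro ⟨t₀, x₀⟩ ε hε
  set K : ℝ := max C 0 with hK
  set T : ℝ := |t₀| + 1 with hT
  have hct : ContinuousAt (fun t => φ t x₀) t₀ := (hφ' t₀ x₀).continuousAt
  rw [Metric.continuousAt_iff] at hct
  obtain ⟨δ₁, hδ₁pos, hδ₁⟩ := hct (ε / 2) (by positivity)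
  have hexp : (0:ℝ) < Real.exp (K * T) := Real.exp_pos _
  refine ⟨min (min δ₁ 1) (ε / (2 * Real.exp (K * T))), by positivity, ?_⟩
  rintro ⟨t, x⟩ hdist
  rw [Prod.dist_eq, max_lt_iff] at hdist
  obtain ⟨hdt, hdx⟩ := hdist
  have hdt1 : dist t t₀ < δ₁ := lt_of_lt_of_le hdt (le_trans (min_le_left _ _) (min_le_left _ _))
  have hdtT : dist t t₀ < 1 := lt_of_lt_of_le hdt (le_trans (min_le_left _ _) (min_le_right _ _))
  have hdxe : dist x x₀ < ε / (2 * Real.exp (K * T)) :=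
    lt_of_lt_of_le hdx (min_le_right _ _)
  have htmem : t ∈ Icc (-T) T := by
    rw [Real.dist_eq] at hdtT
    constructor
    · have := abs_lt.mp hdtT
      have h2 := neg_abs_le t₀
      rw [hT]; linarith [this.1]
    · have := abs_lt.mp hdtT
      have h2 := le_abs_self t₀
      rw [hT]; linarith [this.2]
  calc dist (φ t x) (φ t₀ x₀)
      ≤ dist (φ t x) (φ t x₀) + dist (φ t x₀) (φ t₀ x₀) := dist_triangle _ _ _
    _ < ε / 2 + ε / 2 := by
        apply add_lt_add_of_le_of_lt
        · refine le_trans (flow_dist_le b hb C hC φ hφ0 hφ' T t htmem x x₀) ?_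
          calc dist x x₀ * Real.exp (K * T)
              ≤ (ε / (2 * Real.exp (K * T))) * Real.exp (K * T) :=
                mul_le_mul_of_nonneg_right hdxe.le hexp.le
            _ = ε / 2 := by field_simp
        · exact hδ₁ hdt1
    _ = ε := by ring

lemma flow_main_nonneg (x : E) (v : ℝ) (hv : 0 ≤ v) :
    ∃ L : E →L[ℝ] E, HasFDerivAt (φ v) L x ∧
      L.det = Real.exp (∫ s in (0:ℝ)..v,
        LinearMap.trace ℝ E (fderiv ℝ b (φ s x) : E →ₗ[ℝ] E)) := by
  have hcx : Continuous fun s => φ s x := by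
    rw [continuous_iff_continuousAt]; exact fun s => (hφ' s x).continuousAt
  set A : ℝ → E →L[ℝ] E := fun t => fderiv ℝ b (φ t x) with hA
  have hAc : Continuous A := (hb.continuous_fderiv one_ne_zero).comp hcx
  have hAb : ∀ t, ‖A t‖ ≤ C := fun t => hC _
  obtain ⟨L, hL0, hLc, hL'⟩ := exists_linear_ode A hAc C hAb
  refine ⟨L v, ?_, ?_⟩
  · exact flow_hasFDerivAt_nonneg b hb C hC φ hφ0 hφ' x v hv L hL0 hL'
  · exact det_of_linear_ode A hAc L hL0 hL' v

lemma flow_main (x : E) (v : ℝ) :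
    ∃ L : E →L[ℝ] E, HasFDerivAt (φ v) L x ∧
      L.det = Real.exp (∫ s in (0:ℝ)..v,
        LinearMap.trace ℝ E (fderiv ℝ b (φ s x) : E →ₗ[ℝ] E)) := by
  rcases le_or_gt 0 v with hv | hv
  · exact flow_main_nonneg b hb C hC φ hφ0 hφ' x v hv
  · obtain ⟨hb2, hC2, hψ0, hψ'⟩ := flow_rev_props b hb C hC φ hφ0 hφ'
    obtain ⟨L, hL, hdet⟩ := flow_main_nonneg (fun y => -(b y)) hb2 C hC2
      (fun t y => φ (-t) y) hψ0 hψ' x (-v) (by linarith)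
    have hfun : (fun y => φ (-(-v)) y) = φ v := by funext y; rw [neg_neg]
    refine ⟨L, by rw [← hfun]; exact hL, ?_⟩
    rw [hdet]
    congr 1
    have hptwise : ∀ s : ℝ,
        LinearMap.trace ℝ E ((fderiv ℝ (fun y => -(b y)) (φ (-s) x) : E →L[ℝ] E) : E →ₗ[ℝ] E)
        = -(LinearMap.trace ℝ E ((fderiv ℝ b (φ (-s) x) : E →L[ℝ] E) : E →ₗ[ℝ] E)) := by
      intro s
      have h1 : fderiv ℝ (fun y => -(b y)) (φ (-s) x) = -fderiv ℝ b (φ (-s) x) := fderiv_neg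
      rw [h1]
      rw [ContinuousLinearMap.coe_neg, map_neg]
    calc ∫ s in (0:ℝ)..(-v),
          LinearMap.trace ℝ E ((fderiv ℝ (fun y => -(b y)) (φ (-s) x) : E →L[ℝ] E) : E →ₗ[ℝ] E)
        = ∫ s in (0:ℝ)..(-v),
          -(LinearMap.trace ℝ E ((fderiv ℝ b (φ (-s) x) : E →L[ℝ] E) : E →ₗ[ℝ] E)) := by
          simp only [hptwise]
      _ = ∫ s in (0:ℝ)..v, LinearMap.trace ℝ E ((fderiv ℝ b (φ s x) : E →L[ℝ] E) : E →ₗ[ℝ] E) := by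
          rw [intervalIntegral.integral_neg]
          rw [intervalIntegral.integral_comp_neg (a := (0:ℝ)) (b := -v)
            (fun s => LinearMap.trace ℝ E ((fderiv ℝ b (φ s x) : E →L[ℝ] E) : E →ₗ[ℝ] E))]
          rw [neg_neg, neg_zero, intervalIntegral.integral_symm 0 v, neg_neg]

end FlowProps
end Part5

/-- Density formula for the pushforward of an absolutely continuous probability
measure under the flow of a `C¹` vector field with bounded derivative. -/
theorem stmt_0 (N : ℕ) (hN : 1 ≤ N)
    (b : EuclideanSpace ℝ (Fin N) → EuclideanSpace ℝ (Fin N))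
    (hb : ContDiff ℝ 1 b) (hb' : ∃ C : ℝ, ∀ x, ‖fderiv ℝ b x‖ ≤ C)
    (φ : ℝ → EuclideanSpace ℝ (Fin N) → EuclideanSpace ℝ (Fin N))
    (hφ0 : ∀ x, φ 0 x = x)
    (hφ' : ∀ (v : ℝ) (x : EuclideanSpace ℝ (Fin N)),
      HasDerivAt (fun t => φ t x) (b (φ v x)) v)
    (m : EuclideanSpace ℝ (Fin N) → ℝ)
    (hmc : Continuous m) (hmpos : ∀ x, 0 < m x) (hm1 : ∫ x, m x = 1)
    (μ : Measure (EuclideanSpace ℝ (Fin N)))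
    (hμ : μ = volume.withDensity fun x => ENNReal.ofReal (m x)) :
    ∀ v : ℝ,
      μ.map (φ v) ≪ μ ∧
      (μ.map (φ v)).rnDeriv μ =ᵐ[(volume : Measure (EuclideanSpace ℝ (Fin N)))]
        fun x => ENNReal.ofReal ((m (φ (-v) x) / m x) *
          Real.exp (-∫ σ in (0:ℝ)..v,
            LinearMap.trace ℝ (EuclideanSpace ℝ (Fin N))
              (fderiv ℝ b (φ (-σ) x) :
                EuclideanSpace ℝ (Fin N) →ₗ[ℝ] EuclideanSpace ℝ (Fin N)))) := by
  intro v
  obtain ⟨C, hC⟩ := hb'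
  have hjoint : Continuous fun p : ℝ × (EuclideanSpace ℝ (Fin N)) => φ p.1 p.2 :=
    flow_joint_continuous b hb C hC φ hφ0 hφ'
  have hφcont : ∀ u : ℝ, Continuous (φ u) := fun u =>
    hjoint.comp (continuous_const.prodMk continuous_id)
  have hleft : ∀ (u : ℝ) (x : (EuclideanSpace ℝ (Fin N))), φ (-u) (φ u x) = x := fun u x =>
    flow_left_inv b hb C hC φ hφ0 hφ' u x
  have hright : ∀ x : (EuclideanSpace ℝ (Fin N)), φ v (φ (-v) x) = x := by
    intro x
    have h := hleft (-v) x
    rwa [neg_neg] at h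
  have hinj : Function.Injective (φ (-v)) := by
    intro a a' haa
    have h := congrArg (φ v) haa
    rwa [hright, hright] at h
  have hpre : ∀ A : Set (EuclideanSpace ℝ (Fin N)), φ v ⁻¹' A = φ (-v) '' A := by
    intro A; ext x
    constructor
    · intro hx; exact ⟨φ v x, hx, hleft v x⟩
    · rintro ⟨a, ha, rfl⟩
      show φ v (φ (-v) a) ∈ A
      rwa [hright a]
  -- derivative and determinant of φ (-v)
  have hmain : ∀ x : (EuclideanSpace ℝ (Fin N)), ∃ L : (EuclideanSpace ℝ (Fin N)) →L[ℝ] (EuclideanSpace ℝ (Fin N)), HasFDerivAt (φ (-v)) L x ∧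
      L.det = Real.exp (-∫ σ in (0:ℝ)..v,
        LinearMap.trace ℝ (EuclideanSpace ℝ (Fin N)) ((fderiv ℝ b (φ (-σ) x) : (EuclideanSpace ℝ (Fin N)) →L[ℝ] (EuclideanSpace ℝ (Fin N))) : (EuclideanSpace ℝ (Fin N)) →ₗ[ℝ] (EuclideanSpace ℝ (Fin N)))) := by
    intro x
    obtain ⟨L, hL, hdet⟩ := flow_main b hb C hC φ hφ0 hφ' x (-v)
    refine ⟨L, hL, ?_⟩
    rw [hdet]
    congr 1
    rw [intervalIntegral.integral_comp_neg (a := (0:ℝ)) (b := v)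
      (fun s => LinearMap.trace ℝ (EuclideanSpace ℝ (Fin N)) ((fderiv ℝ b (φ s x) : (EuclideanSpace ℝ (Fin N)) →L[ℝ] (EuclideanSpace ℝ (Fin N))) : (EuclideanSpace ℝ (Fin N)) →ₗ[ℝ] (EuclideanSpace ℝ (Fin N))))]
    rw [neg_zero, intervalIntegral.integral_symm 0 (-v), neg_neg]
  choose Dm hDm hdet using hmain
  -- continuity of the exponential density factor
  have hIc : Continuous fun x : (EuclideanSpace ℝ (Fin N)) => ∫ σ in (0:ℝ)..v,
      LinearMap.trace ℝ (EuclideanSpace ℝ (Fin N)) ((fderiv ℝ b (φ (-σ) x) : (EuclideanSpace ℝ (Fin N)) →L[ℝ] (EuclideanSpace ℝ (Fin N))) : (EuclideanSpace ℝ (Fin N)) →ₗ[ℝ] (EuclideanSpace ℝ (Fin N))) := by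
    apply intervalIntegral.continuous_parametric_intervalIntegral_of_continuous'
    have h1 : Continuous fun p : (EuclideanSpace ℝ (Fin N)) × ℝ => φ (-p.2) p.1 :=
      hjoint.comp ((continuous_snd.neg).prodMk continuous_fst)
    have h2 : Continuous fun p : (EuclideanSpace ℝ (Fin N)) × ℝ => fderiv ℝ b (φ (-p.2) p.1) :=
      (hb.continuous_fderiv one_ne_zero).comp h1
    exact ((LinearMap.trace ℝ (EuclideanSpace ℝ (Fin N))).comp
      (ContinuousLinearMap.coeLM ℝ)).continuous_of_finiteDimensional.comp h2
  set e : (EuclideanSpace ℝ (Fin N)) → ℝ := fun x => Real.exp (-∫ σ in (0:ℝ)..v,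
    LinearMap.trace ℝ (EuclideanSpace ℝ (Fin N)) ((fderiv ℝ b (φ (-σ) x) : (EuclideanSpace ℝ (Fin N)) →L[ℝ] (EuclideanSpace ℝ (Fin N))) : (EuclideanSpace ℝ (Fin N)) →ₗ[ℝ] (EuclideanSpace ℝ (Fin N)))) with he
  have hec : Continuous e := Real.continuous_exp.comp hIc.neg
  -- measure-theoretic facts about μ
  have hm_int : Integrable m := by
    by_contra hcon
    rw [integral_undef hcon] at hm1
    exact one_ne_zero hm1.symm
  have hμfin : IsFiniteMeasure μ := by
    constructor
    rw [hμ, withDensity_apply _ MeasurableSet.univ, Measure.restrict_univ,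
      ← ofReal_integral_eq_lintegral_ofReal hm_int (ae_of_all _ fun x => (hmpos x).le), hm1]
    exact ENNReal.ofReal_lt_top
  have hm_meas : Measurable fun x : (EuclideanSpace ℝ (Fin N)) => ENNReal.ofReal (m x) :=
    ENNReal.measurable_ofReal.comp hmc.measurable
  have hvolac : (volume : Measure (EuclideanSpace ℝ (Fin N))) ≪ μ := by
    refine Measure.AbsolutelyContinuous.mk fun s hs hμs => ?_
    rw [hμ, withDensity_apply _ hs, lintegral_eq_zero_iff hm_meas] at hμs
    rw [Filter.EventuallyEq, ae_iff] at hμs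
    have h2 : {a : (EuclideanSpace ℝ (Fin N)) | ¬ ENNReal.ofReal (m a) = (0 : (EuclideanSpace ℝ (Fin N)) → ENNReal) a} = Set.univ := by
      ext a
      simp [ENNReal.ofReal_eq_zero, not_le, hmpos a]
    rwa [h2, Measure.restrict_apply_univ] at hμs
  -- the pushforward as a density
  set d : (EuclideanSpace ℝ (Fin N)) → ENNReal := fun x => ENNReal.ofReal (m (φ (-v) x) * e x) with hd
  have hd_meas : Measurable d :=
    ENNReal.measurable_ofReal.comp ((hmc.comp (hφcont (-v))).mul hec).measurable
  have hmap : μ.map (φ v) = volume.withDensity d := by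
    refine Measure.ext fun A hA => ?_
    rw [Measure.map_apply (hφcont v).measurable hA, hμ,
      withDensity_apply _ ((hφcont v).measurable hA), withDensity_apply _ hA, hpre A,
      MeasureTheory.lintegral_image_eq_lintegral_abs_det_fderiv_mul volume hA
        (fun x _ => (hDm x).hasFDerivWithinAt) hinj.injOn
        (fun x => ENNReal.ofReal (m x))]
    refine lintegral_congr fun x => ?_
    rw [hdet x, abs_of_pos (Real.exp_pos _), ← ENNReal.ofReal_mul (Real.exp_pos _).le]
    rw [hd, mul_comm]
  -- the candidate density w.r.t. μ
  set hfun : (EuclideanSpace ℝ (Fin N)) → ENNReal := fun x => ENNReal.ofReal ((m (φ (-v) x) / m x) * e x) with hh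
  have hfun_meas : Measurable hfun :=
    ENNReal.measurable_ofReal.comp
      (((hmc.comp (hφcont (-v))).div hmc (fun x => (hmpos x).ne')).mul hec).measurable
  have hwd : μ.withDensity hfun = μ.map (φ v) := by
    rw [hmap, hμ, ← withDensity_mul _ hm_meas hfun_meas]
    congr 1
    funext x
    show ENNReal.ofReal (m x) * ENNReal.ofReal ((m (φ (-v) x) / m x) * e x) = d x
    rw [← ENNReal.ofReal_mul (hmpos x).le, hd]
    congr 1
    field_simp
    rw [mul_assoc]
    exact mul_div_cancel_left₀ _ (hmpos x).ne'
  constructor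
  · rw [← hwd]
    exact withDensity_absolutelyContinuous μ hfun
  · have hrn : (μ.withDensity hfun).rnDeriv μ =ᵐ[μ] hfun :=
      Measure.rnDeriv_withDensity μ hfun_meas
    rw [hwd] at hrn
    exact hrn.filter_mono hvolac.ae_le
end

section
/- Let (M,d) be a metric space with its Borel σ-algebra and a Borel probability measure μ. Let f_n (n ∈ ℕ) and f be Borel measurable maps M → M with f_n → f μ-almost everywhere. Assume that for each n the image measure μ ∘ f_n^{-1} is absolutely continuous with respect to μ with density ρ_n := d(μ∘f_n^{-1})/dμ, that the family (ρ_n)_{n∈ℕ} is uniformly integrable, and that ρ_n converges μ-almost everywhere to a measurable function ρ. Then μ ∘ f^{-1} is absolutely continuous with respect to μ with d(μ∘f^{-1})/dμ = ρ μ-almost everywhere, and ρ_n → ρ in L¹(μ). -/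
open MeasureTheory Filter Topology
open scoped NNReal ENNReal

lemma ofReal_integral_norm_eq_lintegral_nnnorm' {α G : Type*} [MeasurableSpace α] {μ : Measure α}
    [NormedAddCommGroup G] {f : α → G} (hf : Integrable f μ) :
    ENNReal.ofReal (∫ x, ‖f x‖ ∂μ) = ∫⁻ x, ‖f x‖₊ ∂μ := by
  rw [ofReal_integral_norm_eq_lintegral_enorm hf]
  simp only [enorm_eq_nnnorm]

lemma eLpNorm_one_eq_lintegral_nnnorm' {α G : Type*} [MeasurableSpace α] {μ : Measure α}
    [NormedAddCommGroup G] {f : α → G} :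
    eLpNorm f 1 μ = ∫⁻ x, ‖f x‖₊ ∂μ := by
  rw [eLpNorm_one_eq_lintegral_enorm]
  simp only [enorm_eq_nnnorm]

/-- Limits of maps whose image measures are absolutely continuous with uniformly
integrable, a.e. convergent densities: the limit map's image measure is absolutely
continuous with the limit density, and the densities converge in `L¹`. -/
theorem stmt_1 {M : Type*} [MetricSpace M] [MeasurableSpace M] [BorelSpace M]
    (μ : Measure M) [IsProbabilityMeasure μ]
    (f : ℕ → M → M) (g : M → M)
    (hf : ∀ n, Measurable (f n)) (hg : Measurable g)
    (hconv : ∀ᵐ x ∂μ, Tendsto (fun n => f n x) atTop (𝓝 (g x)))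
    (ρ : ℕ → M → ℝ) (ρlim : M → ℝ)
    (hρmeas : ∀ n, Measurable (ρ n))
    (hρint : ∀ n, Integrable (ρ n) μ)
    (hdens : ∀ n, μ.map (f n) = μ.withDensity fun x => ENNReal.ofReal (ρ n x))
    (hbdd : ∃ C : ℝ, ∀ n, ∫ x, |ρ n x| ∂μ ≤ C)
    (hui : ∀ ε > (0:ℝ), ∃ δ > (0:ℝ), ∀ n, ∀ A : Set M, MeasurableSet A →
      μ A < ENNReal.ofReal δ → ∫ x in A, |ρ n x| ∂μ < ε)
    (hρlimmeas : Measurable ρlim)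
    (hρconv : ∀ᵐ x ∂μ, Tendsto (fun n => ρ n x) atTop (𝓝 (ρlim x))) :
    μ.map g = (μ.withDensity fun x => ENNReal.ofReal (ρlim x)) ∧
    Tendsto (fun n => ∫ x, |ρ n x - ρlim x| ∂μ) atTop (𝓝 0) := by
  classical
  obtain ⟨C, hC⟩ := hbdd
  -- ρlim is integrable (Fatou)
  have hnorm_eq : ∀ n, (∫⁻ x, ‖ρ n x‖₊ ∂μ) = ENNReal.ofReal (∫ x, |ρ n x| ∂μ) := by
    intro n
    rw [← ofReal_integral_norm_eq_lintegral_nnnorm' (hρint n)]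
    simp [Real.norm_eq_abs]
  have hρlim_int : Integrable ρlim μ := by
    refine ⟨hρlimmeas.aestronglyMeasurable, ?_⟩
    show (∫⁻ x, ‖ρlim x‖₊ ∂μ) < ⊤
    have h1 : (∫⁻ x, ‖ρlim x‖₊ ∂μ) ≤ atTop.liminf fun n => ∫⁻ x, ‖ρ n x‖₊ ∂μ := by
      have : (∫⁻ x, ‖ρlim x‖₊ ∂μ) = ∫⁻ x, atTop.liminf (fun n => (‖ρ n x‖₊ : ENNReal)) ∂μ := by
        refine lintegral_congr_ae ?_
        filter_upwards [hρconv] with x hx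
        have : Tendsto (fun n => (‖ρ n x‖₊ : ENNReal)) atTop (𝓝 (‖ρlim x‖₊ : ENNReal)) := by
          refine ENNReal.tendsto_coe.mpr ?_
          exact Tendsto.nnnorm hx
        exact (this.liminf_eq).symm
      rw [this]
      exact lintegral_liminf_le fun n => (hρmeas n).nnnorm.coe_nnreal_ennreal
    refine lt_of_le_of_lt (h1.trans ?_) (show ENNReal.ofReal C < ⊤ from ENNReal.ofReal_lt_top)
    refine liminf_le_of_frequently_le' (Frequently.of_forall fun n => ?_)
    rw [hnorm_eq n]
    exact ENNReal.ofReal_le_ofReal (hC n)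
  -- uniform integrability in the mathlib sense
  have hUI : UnifIntegrable ρ 1 μ := by
    intro ε hε
    obtain ⟨δ, hδ, hδ'⟩ := hui (ε / 2) (by positivity)
    refine ⟨δ / 2, by positivity, fun n s hs hμs => ?_⟩
    have hμs' : μ s < ENNReal.ofReal δ :=
      lt_of_le_of_lt hμs (ENNReal.ofReal_lt_ofReal_iff hδ |>.mpr (by linarith))
    have h2 := hδ' n s hs hμs'
    have : eLpNorm (s.indicator (ρ n)) 1 μ = ENNReal.ofReal (∫ x in s, |ρ n x| ∂μ) := by
      rw [eLpNorm_one_eq_lintegral_nnnorm']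
      have hptw : ∀ x, (‖s.indicator (ρ n) x‖₊ : ENNReal)
          = s.indicator (fun x => (‖ρ n x‖₊ : ENNReal)) x := by
        intro x
        by_cases h : x ∈ s <;> simp [Set.indicator_of_mem, Set.indicator_of_notMem, h]
      simp_rw [hptw]
      rw [lintegral_indicator hs, ← ofReal_integral_norm_eq_lintegral_nnnorm'
        ((hρint n).restrict (s := s))]
      simp [Real.norm_eq_abs]
    rw [this]
    exact ENNReal.ofReal_le_ofReal (h2.le.trans (by linarith))
  -- Vitali: L¹ convergence
  have hmem : ∀ n, MemLp (ρ n) 1 μ := fun n => memLp_one_iff_integrable.mpr (hρint n)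
  have hTIM : TendstoInMeasure μ ρ atTop ρlim :=
    tendstoInMeasure_of_tendsto_ae (fun n => (hρmeas n).aestronglyMeasurable) hρconv
  have hL1 : Tendsto (fun n => eLpNorm (ρ n - ρlim) 1 μ) atTop (𝓝 0) :=
    tendsto_Lp_finite_of_tendstoInMeasure le_rfl ENNReal.one_ne_top
      (fun n => (hρmeas n).aestronglyMeasurable) (memLp_one_iff_integrable.mpr hρlim_int)
      hUI hTIM
  have hL1' : Tendsto (fun n => ∫ x, |ρ n x - ρlim x| ∂μ) atTop (𝓝 0) := by
    have heq : ∀ n, ∫ x, |ρ n x - ρlim x| ∂μ = (eLpNorm (ρ n - ρlim) 1 μ).toReal := by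
      intro n
      rw [eLpNorm_one_eq_lintegral_nnnorm',
        ← ofReal_integral_norm_eq_lintegral_nnnorm' ((hρint n).sub hρlim_int),
        ENNReal.toReal_ofReal (by positivity)]
      simp [Real.norm_eq_abs]
    simp_rw [heq]
    have := (ENNReal.tendsto_toReal (ENNReal.zero_ne_top)).comp hL1
    exact this
  refine ⟨?_, hL1'⟩
  -- Measure equality via bounded continuous test functions
  have : IsProbabilityMeasure (μ.map g) := Measure.isProbabilityMeasure_map hg.aemeasurable
  refine ext_of_forall_lintegral_eq_of_IsFiniteMeasure fun h => ?_
  set hr : M → ℝ := fun x => (h x : ℝ) with hhr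
  set Ch : ℝ := (nndist 0 h : ℝ) with hCh
  have hr_nonneg : ∀ x, 0 ≤ hr x := fun x => (h x).2
  have hr_bdd : ∀ x, hr x ≤ Ch := fun x =>
    NNReal.coe_le_coe.mpr (h.apply_le_nndist_zero x)
  have hr_meas : Measurable hr := (NNReal.continuous_coe.comp h.continuous).measurable
  have hhm : Measurable fun y : M => ((h y : ℝ≥0) : ENNReal) :=
    measurable_coe_nnreal_ennreal.comp h.continuous.measurable
  have hcoe : ∀ y, ((h y : ℝ≥0) : ENNReal) = ENNReal.ofReal (hr y) := fun y => by
    simp [hhr, ENNReal.ofReal_coe_nnreal]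
  -- positive parts
  set r : ℕ → M → ℝ := fun n x => max (ρ n x) 0 with hrdef
  set rl : M → ℝ := fun x => max (ρlim x) 0 with hrldef
  have hr_int : ∀ n, Integrable (r n) μ := fun n => (hρint n).pos_part
  have hrl_int : Integrable rl μ := hρlim_int.pos_part
  have hofReal_max : ∀ a : ℝ, ENNReal.ofReal (max a 0) = ENNReal.ofReal a := by
    intro a
    rcases le_total a 0 with ha | ha
    · simp [max_eq_right ha, ENNReal.ofReal_of_nonpos ha]
    · simp [max_eq_left ha]
  -- step B: for each n, lintegral of h∘fₙ equals ofReal of real integral of rₙ * hr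
  have stepB : ∀ n, (∫⁻ x, ((h (f n x) : ℝ≥0) : ENNReal) ∂μ)
      = ENNReal.ofReal (∫ x, r n x * hr x ∂μ) := by
    intro n
    have hmul_int : Integrable (fun x => r n x * hr x) μ := by
      have := (hr_int n).bdd_mul hr_meas.aestronglyMeasurable
        (Filter.Eventually.of_forall fun x => by simpa [Real.norm_eq_abs, abs_of_nonneg (hr_nonneg x)] using hr_bdd x)
      simpa [mul_comm] using this
    have h1 : (∫⁻ x, ((h (f n x) : ℝ≥0) : ENNReal) ∂μ)
        = ∫⁻ x, ((h x : ℝ≥0) : ENNReal) ∂(μ.map (f n)) := by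
      rw [lintegral_map hhm (hf n)]
    rw [h1, hdens n, lintegral_withDensity_eq_lintegral_mul _
      (show Measurable fun x => ENNReal.ofReal (ρ n x) from ENNReal.measurable_ofReal.comp (hρmeas n))
      hhm]
    have h2 : ∀ x, (ENNReal.ofReal (ρ n x)) * ((h x : ℝ≥0) : ENNReal)
        = ENNReal.ofReal (r n x * hr x) := by
      intro x
      rw [hcoe, ← hofReal_max (ρ n x), ← ENNReal.ofReal_mul (le_max_right _ _)]
    calc ∫⁻ x, ((fun x => ENNReal.ofReal (ρ n x)) * fun x => ((h x : ℝ≥0) : ENNReal)) x ∂μ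
        = ∫⁻ x, ENNReal.ofReal (r n x * hr x) ∂μ := by
          refine lintegral_congr fun x => ?_
          simp only [Pi.mul_apply]
          exact h2 x
      _ = ENNReal.ofReal (∫ x, r n x * hr x ∂μ) := by
          rw [ofReal_integral_eq_lintegral_ofReal hmul_int
            (Filter.Eventually.of_forall fun x => mul_nonneg (le_max_right _ _) (hr_nonneg x))]
  -- step A: dominated convergence in ℝ≥0∞
  have stepA : Tendsto (fun n => ∫⁻ x, ((h (f n x) : ℝ≥0) : ENNReal) ∂μ) atTop
      (𝓝 (∫⁻ x, ((h (g x) : ℝ≥0) : ENNReal) ∂μ)) := by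
    refine tendsto_lintegral_of_dominated_convergence (fun _ => ENNReal.ofReal Ch)
      (fun n => measurable_coe_nnreal_ennreal.comp (h.continuous.measurable.comp (hf n)))
      (fun n => Filter.Eventually.of_forall fun x => ?_) (by simp) ?_
    · show ((h (f n x) : ℝ≥0) : ENNReal) ≤ ENNReal.ofReal Ch
      rw [hcoe]
      exact ENNReal.ofReal_le_ofReal (hr_bdd _)
    · filter_upwards [hconv] with x hx
      exact (ENNReal.continuous_coe.tendsto _).comp ((h.continuous.tendsto _).comp hx)
  -- step C: the real integrals converge
  have stepC : Tendsto (fun n => ∫ x, r n x * hr x ∂μ) atTop (𝓝 (∫ x, rl x * hr x ∂μ)) := by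
    rw [tendsto_iff_dist_tendsto_zero]
    have hmul_int : ∀ n, Integrable (fun x => r n x * hr x) μ := by
      intro n
      have := (hr_int n).bdd_mul hr_meas.aestronglyMeasurable
        (Filter.Eventually.of_forall fun x => by simpa [Real.norm_eq_abs, abs_of_nonneg (hr_nonneg x)] using hr_bdd x)
      simpa [mul_comm] using this
    have hmull_int : Integrable (fun x => rl x * hr x) μ := by
      have := hrl_int.bdd_mul hr_meas.aestronglyMeasurable
        (Filter.Eventually.of_forall fun x => by simpa [Real.norm_eq_abs, abs_of_nonneg (hr_nonneg x)] using hr_bdd x)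
      simpa [mul_comm] using this
    have key : ∀ n, dist (∫ x, r n x * hr x ∂μ) (∫ x, rl x * hr x ∂μ)
        ≤ Ch * ∫ x, |ρ n x - ρlim x| ∂μ := by
      intro n
      rw [Real.dist_eq, ← integral_sub (hmul_int n) hmull_int]
      have habs : ∀ x, |r n x * hr x - rl x * hr x| ≤ Ch * |ρ n x - ρlim x| := by
        intro x
        rw [← sub_mul, abs_mul, abs_of_nonneg (hr_nonneg x), mul_comm]
        refine mul_le_mul (hr_bdd x) ?_ (abs_nonneg _) ((nndist 0 h).2)
        exact abs_max_sub_max_le_abs _ _ _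
      calc |∫ x, (r n x * hr x - rl x * hr x) ∂μ|
          ≤ ∫ x, |r n x * hr x - rl x * hr x| ∂μ := by
            simpa [Real.norm_eq_abs] using
              norm_integral_le_integral_norm (fun x => r n x * hr x - rl x * hr x) (μ := μ)
        _ ≤ ∫ x, Ch * |ρ n x - ρlim x| ∂μ := by
            refine integral_mono ((hmul_int n).sub hmull_int).abs
              (((hρint n).sub hρlim_int).abs.const_mul _) fun x => habs x
        _ = Ch * ∫ x, |ρ n x - ρlim x| ∂μ := by rw [integral_const_mul]
    have hzero : Tendsto (fun n => Ch * ∫ x, |ρ n x - ρlim x| ∂μ) atTop (𝓝 0) := by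
      simpa using hL1'.const_mul Ch
    exact squeeze_zero (fun n => dist_nonneg) key hzero
  -- combine
  have eq1 : (∫⁻ x, ((h x : ℝ≥0) : ENNReal) ∂(μ.map g))
      = ∫⁻ x, ((h (g x) : ℝ≥0) : ENNReal) ∂μ := by
    rw [lintegral_map hhm hg]
  have eq2 : (∫⁻ x, ((h x : ℝ≥0) : ENNReal) ∂(μ.withDensity fun x => ENNReal.ofReal (ρlim x)))
      = ENNReal.ofReal (∫ x, rl x * hr x ∂μ) := by
    rw [lintegral_withDensity_eq_lintegral_mul _
      (show Measurable fun x => ENNReal.ofReal (ρlim x) from ENNReal.measurable_ofReal.comp hρlimmeas)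
      hhm]
    have hmull_int : Integrable (fun x => rl x * hr x) μ := by
      have := hrl_int.bdd_mul hr_meas.aestronglyMeasurable
        (Filter.Eventually.of_forall fun x => by simpa [Real.norm_eq_abs, abs_of_nonneg (hr_nonneg x)] using hr_bdd x)
      simpa [mul_comm] using this
    calc ∫⁻ x, ((fun x => ENNReal.ofReal (ρlim x)) * fun x => ((h x : ℝ≥0) : ENNReal)) x ∂μ
        = ∫⁻ x, ENNReal.ofReal (rl x * hr x) ∂μ := by
          refine lintegral_congr fun x => ?_
          simp only [Pi.mul_apply]
          rw [hcoe, ← hofReal_max (ρlim x), ← ENNReal.ofReal_mul (le_max_right _ _)]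
      _ = ENNReal.ofReal (∫ x, rl x * hr x ∂μ) := by
          rw [ofReal_integral_eq_lintegral_ofReal hmull_int
            (Filter.Eventually.of_forall fun x => mul_nonneg (le_max_right _ _) (hr_nonneg x))]
  rw [eq1, eq2]
  have t1 : Tendsto (fun n => ∫⁻ x, ((h (f n x) : ℝ≥0) : ENNReal) ∂μ) atTop
      (𝓝 (ENNReal.ofReal (∫ x, rl x * hr x ∂μ))) := by
    simp_rw [stepB]
    exact (ENNReal.tendsto_ofReal stepC)
  exact tendsto_nhds_unique stepA t1
end

section
/- Let G : Ω → ℝ^d be bounded, continuous, and Lipschitz along constant shifts, i.e. there is L ≥ 0 with ‖G(V + x𝟙) − G(V + y𝟙)‖ ≤ L‖x − y‖ for all V ∈ Ω and x, y ∈ ℝ^d. Then: (i) for every W ∈ Ω there exists a unique continuous φ_W : ℝ → ℝ^d with φ_W(s) = ∫₀^s G(θ_v W + φ_W(v)𝟙) dv for all s ∈ ℝ; (ii) defining W^s := θ_s W + φ_W(s)𝟙, one has W^0 = W and (W^s)^v = W^{s+v} for all s, v ∈ ℝ; equivalently, φ_W(s+v) = φ_W(s) + φ_{W^s}(v) for all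 s, v ∈ ℝ. -/
open MeasureTheory Filter Topology

/-- The time shift `θ_s` on the path space `C(ℝ, ℝ^d)`: `(θ_s W)(u) = W(u + s)`. -/
noncomputable def pathShift {d : ℕ} (s : ℝ) (W : C(ℝ, EuclideanSpace ℝ (Fin d))) :
    C(ℝ, EuclideanSpace ℝ (Fin d)) :=
  W.comp ⟨fun u => u + s, by continuity⟩

section Aux

variable {d : ℕ}

lemma pathShift_apply (s : ℝ) (W : C(ℝ, EuclideanSpace ℝ (Fin d))) (t : ℝ) :
    pathShift s W t = W (t + s) := rfl

lemma pathShift_zero (W : C(ℝ, EuclideanSpace ℝ (Fin d))) : pathShift 0 W = W := by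
  ext t; simp [pathShift_apply]

lemma pathShift_pathShift (s v : ℝ) (W : C(ℝ, EuclideanSpace ℝ (Fin d))) :
    pathShift v (pathShift s W) = pathShift (s + v) W := by
  ext t; simp [pathShift_apply]; ring_nf

lemma pathShift_add_const (v : ℝ) (W : C(ℝ, EuclideanSpace ℝ (Fin d)))
    (c : EuclideanSpace ℝ (Fin d)) :
    pathShift v (W + ContinuousMap.const ℝ c) = pathShift v W + ContinuousMap.const ℝ c := by
  ext t; simp [pathShift_apply]

lemma continuous_pathShift (W : C(ℝ, EuclideanSpace ℝ (Fin d))) :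
    Continuous fun s => pathShift s W := by
  apply ContinuousMap.continuous_of_continuous_uncurry
  exact W.continuous.comp (by continuity)

lemma continuous_integrand (G : C(ℝ, EuclideanSpace ℝ (Fin d)) → EuclideanSpace ℝ (Fin d))
    (hGc : Continuous G) (W : C(ℝ, EuclideanSpace ℝ (Fin d)))
    (ψ : ℝ → EuclideanSpace ℝ (Fin d)) (hψ : Continuous ψ) :
    Continuous fun v => G (pathShift v W + ContinuousMap.const ℝ (ψ v)) :=
  hGc.comp ((continuous_pathShift W).add (ContinuousMap.continuous_const'.comp hψ))

lemma integral_exp_mul (K : ℝ) (hK : K ≠ 0) (s : ℝ) :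
    ∫ v in (0:ℝ)..s, Real.exp (K * v) = (Real.exp (K * s) - 1) / K := by
  have h : ∀ v ∈ Set.uIcc (0:ℝ) s, HasDerivAt (fun v => Real.exp (K * v) / K)
      (Real.exp (K * v)) v := by
    intro v _
    have h1 : HasDerivAt (fun v : ℝ => K * v) K v := by simpa using (hasDerivAt_id v).const_mul K
    have := (h1.exp).div_const K
    simpa [mul_div_assoc, mul_div_cancel_left₀ _ hK, mul_comm] using this
  have := intervalIntegral.integral_eq_sub_of_hasDerivAt h
    ((Real.continuous_exp.comp (continuous_const.mul continuous_id)).intervalIntegrable 0 s)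
  rw [this]
  simp [sub_div]

lemma abs_integral_exp_abs (K : ℝ) (hK : 0 < K) (s : ℝ) :
    |∫ v in (0:ℝ)..s, Real.exp (K * |v|)| ≤ (Real.exp (K * |s|) - 1) / K := by
  rcases le_total 0 s with hs | hs
  · have hcongr : ∀ v ∈ Set.uIcc (0:ℝ) s, Real.exp (K * |v|) = Real.exp (K * v) := by
      intro v hv
      rw [Set.uIcc_of_le hs] at hv
      rw [abs_of_nonneg hv.1]
    rw [intervalIntegral.integral_congr hcongr, integral_exp_mul K hK.ne' s,
      abs_of_nonneg hs]
    have h1 : (1:ℝ) ≤ Real.exp (K * s) := Real.one_le_exp (by positivity)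
    rw [abs_div, abs_of_nonneg (by positivity : (0:ℝ) ≤ K),
      abs_of_nonneg (by linarith : (0:ℝ) ≤ Real.exp (K * s) - 1)]
  · have hcongr : ∀ v ∈ Set.uIcc (0:ℝ) s, Real.exp (K * |v|) = Real.exp (K * (-v)) := by
      intro v hv
      rw [Set.uIcc_of_ge hs] at hv
      rw [abs_of_nonpos hv.2]
    rw [intervalIntegral.integral_congr hcongr]
    have hcn : (∫ v in (0:ℝ)..s, Real.exp (K * (-v)))
        = ∫ v in (-s)..(-(0:ℝ)), Real.exp (K * v) :=
      intervalIntegral.integral_comp_neg (a := (0:ℝ)) (b := s) (fun v => Real.exp (K * v))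
    rw [hcn]
    rw [show (-(0:ℝ)) = (0:ℝ) by ring, intervalIntegral.integral_symm,
      integral_exp_mul K hK.ne' (-s)]
    have h1 : (1:ℝ) ≤ Real.exp (K * -s) := Real.one_le_exp (by nlinarith)
    rw [abs_of_nonpos hs, abs_neg, abs_div, abs_of_nonneg (by positivity : (0:ℝ) ≤ K),
      abs_of_nonneg (by linarith : (0:ℝ) ≤ Real.exp (K * -s) - 1)]

lemma norm_intervalIntegral_le_abs {E : Type*} [NormedAddCommGroup E] [NormedSpace ℝ E]
    {f : ℝ → E} {g : ℝ → ℝ} (s : ℝ) (hf : Continuous f) (hg : Continuous g)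
    (h : ∀ v, ‖f v‖ ≤ g v) :
    ‖∫ v in (0:ℝ)..s, f v‖ ≤ |∫ v in (0:ℝ)..s, g v| := by
  have hfi : ∀ a b : ℝ, IntervalIntegrable (fun v => ‖f v‖) MeasureTheory.volume a b :=
    fun a b => (hf.norm).intervalIntegrable a b
  have hgi : ∀ a b : ℝ, IntervalIntegrable g MeasureTheory.volume a b :=
    fun a b => hg.intervalIntegrable a b
  refine le_trans (intervalIntegral.norm_integral_le_abs_integral_norm
    (μ := MeasureTheory.volume)) ?_
  rcases le_total 0 s with hs | hs
  · rw [abs_of_nonneg (intervalIntegral.integral_nonneg hs (fun v _ => norm_nonneg _))]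
    refine le_trans (intervalIntegral.integral_mono_on hs (hfi 0 s) (hgi 0 s)
      (fun v _ => h v)) (le_abs_self _)
  · rw [intervalIntegral.integral_symm s 0, abs_neg,
      abs_of_nonneg (intervalIntegral.integral_nonneg hs (fun v _ => norm_nonneg _))]
    refine le_trans (intervalIntegral.integral_mono_on hs (hfi s 0) (hgi s 0)
      (fun v _ => h v)) ?_
    rw [intervalIntegral.integral_symm s 0 (f := g) (μ := MeasureTheory.volume), abs_neg]
    exact le_abs_self _

/-- Main existence-and-uniqueness lemma for the integral equation, via a weighted
Banach fixed point argument on bounded continuous functions. -/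
lemma key (d : ℕ) (G : C(ℝ, EuclideanSpace ℝ (Fin d)) → EuclideanSpace ℝ (Fin d))
    (M : ℝ) (hM : ∀ W, ‖G W‖ ≤ M) (hGc : Continuous G)
    (L : ℝ) (hL : 0 ≤ L)
    (hLip : ∀ (V : C(ℝ, EuclideanSpace ℝ (Fin d))) (x y : EuclideanSpace ℝ (Fin d)),
      ‖G (V + ContinuousMap.const ℝ x) - G (V + ContinuousMap.const ℝ y)‖ ≤ L * ‖x - y‖)
    (W : C(ℝ, EuclideanSpace ℝ (Fin d))) :
    ∃ ψ : ℝ → EuclideanSpace ℝ (Fin d),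
      (Continuous ψ ∧
        ∀ s : ℝ, ψ s = ∫ v in (0:ℝ)..s, G (pathShift v W + ContinuousMap.const ℝ (ψ v))) ∧
      ∀ χ : ℝ → EuclideanSpace ℝ (Fin d), Continuous χ →
        (∀ s : ℝ, χ s = ∫ v in (0:ℝ)..s, G (pathShift v W + ContinuousMap.const ℝ (χ v))) →
        χ = ψ := by
  classical
  set E := EuclideanSpace ℝ (Fin d)
  set K : ℝ := 2 * L + 2 with hKdef
  have hK : 0 < K := by positivity
  set M' : ℝ := max M 0 with hM'def
  have hM' : ∀ V, ‖G V‖ ≤ M' := fun V => le_trans (hM V) (le_max_left _ _)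
  have hM'0 : 0 ≤ M' := le_max_right _ _
  -- the weight
  set w : ℝ → ℝ := fun v => Real.exp (K * |v|) with hwdef
  have hwc : Continuous w := Real.continuous_exp.comp (continuous_const.mul continuous_abs)
  have hwpos : ∀ v, 0 < w v := fun v => Real.exp_pos _
  have hwinv : ∀ v, Real.exp (-(K * |v|)) * w v = 1 := by
    intro v; rw [hwdef, ← Real.exp_add]; simp
  -- the vector field
  set F : ℝ → E → E := fun v x => G (pathShift v W + ContinuousMap.const ℝ x) with hFdef
  have hFc : ∀ (ψ : ℝ → E), Continuous ψ → Continuous (fun v => F v (ψ v)) :=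
    fun ψ hψ => continuous_integrand G hGc W ψ hψ
  have hFb : ∀ v x, ‖F v x‖ ≤ M' := fun v x => hM' _
  have hFlip : ∀ v x y, ‖F v x - F v y‖ ≤ L * ‖x - y‖ := fun v x y => hLip _ x y
  -- the Picard-type map on bounded continuous functions
  have hsmulc : ∀ (u : BoundedContinuousFunction ℝ E), Continuous fun v => w v • u v :=
    fun u => hwc.smul u.continuous
  have hPint : ∀ (u : BoundedContinuousFunction ℝ E) (a b : ℝ),
      IntervalIntegrable (fun v => F v (w v • u v)) MeasureTheory.volume a b :=
    fun u a b => (hFc _ (hsmulc u)).intervalIntegrable a b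
  have hPc : ∀ (u : BoundedContinuousFunction ℝ E), Continuous fun s => ∫ v in (0:ℝ)..s, F v (w v • u v) :=
    fun u => intervalIntegral.continuous_primitive (hPint u) 0
  -- the generic bound: any primitive of something bounded by M', reweighted, is ≤ M'/K
  have hbound : ∀ (ψ : ℝ → E), Continuous ψ →
      ∀ s, ‖Real.exp (-(K * |s|)) • ∫ v in (0:ℝ)..s, F v (ψ v)‖ ≤ M' / K := by
    intro ψ hψ s
    have h1 : ‖∫ v in (0:ℝ)..s, F v (ψ v)‖ ≤ M' * |s - 0| :=
      intervalIntegral.norm_integral_le_of_norm_le_const (fun v _ => hFb v (ψ v))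
    rw [norm_smul, Real.norm_eq_abs, Real.abs_exp]
    have h2 : |s| ≤ Real.exp (K * |s|) / K := by
      rw [le_div_iff₀ hK]
      calc |s| * K = K * |s| := by ring
        _ ≤ Real.exp (K * |s|) := (Real.add_one_le_exp _).trans' (by linarith)
    calc Real.exp (-(K * |s|)) * ‖∫ v in (0:ℝ)..s, F v (ψ v)‖
        ≤ Real.exp (-(K * |s|)) * (M' * (Real.exp (K * |s|) / K)) := by
          have := h1
          rw [sub_zero] at this
          exact mul_le_mul_of_nonneg_left (this.trans (by nlinarith [h2, hM'0]))
            (Real.exp_pos _).le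
      _ = (Real.exp (-(K * |s|)) * Real.exp (K * |s|)) * (M' / K) := by ring
      _ = M' / K := by rw [← Real.exp_add]; simp
  set Φ : (BoundedContinuousFunction ℝ E) → (BoundedContinuousFunction ℝ E) := fun u =>
    BoundedContinuousFunction.ofNormedAddCommGroup
      (fun s => Real.exp (-(K * |s|)) • ∫ v in (0:ℝ)..s, F v (w v • u v))
      ((Real.continuous_exp.comp ((continuous_const.mul continuous_abs).neg)).smul (hPc u))
      (M' / K) (hbound _ (hsmulc u)) with hΦdef
  have hΦapply : ∀ (u : BoundedContinuousFunction ℝ E) (s : ℝ),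
      Φ u s = Real.exp (-(K * |s|)) • ∫ v in (0:ℝ)..s, F v (w v • u v) := fun u s => rfl
  -- contraction estimate
  have hcontr : ∀ u₁ u₂ : BoundedContinuousFunction ℝ E, dist (Φ u₁) (Φ u₂) ≤ (L / K) * dist u₁ u₂ := by
    intro u₁ u₂
    have hd0 : 0 ≤ (L / K) * dist u₁ u₂ := by positivity
    refine (BoundedContinuousFunction.dist_le hd0).2 fun s => ?_
    rw [dist_eq_norm, hΦapply, hΦapply, ← smul_sub]
    have hint : (∫ v in (0:ℝ)..s, F v (w v • u₁ v)) - (∫ v in (0:ℝ)..s, F v (w v • u₂ v))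
        = ∫ v in (0:ℝ)..s, (F v (w v • u₁ v) - F v (w v • u₂ v)) :=
      (intervalIntegral.integral_sub (hPint u₁ 0 s) (hPint u₂ 0 s)).symm
    rw [norm_smul, Real.norm_eq_abs, Real.abs_exp, hint]
    have hptwise : ∀ v, ‖F v (w v • u₁ v) - F v (w v • u₂ v)‖
        ≤ (L * dist u₁ u₂) * w v := by
      intro v
      refine (hFlip v _ _).trans ?_
      rw [← smul_sub, norm_smul, Real.norm_eq_abs, abs_of_pos (hwpos v)]
      have := BoundedContinuousFunction.dist_coe_le_dist (f := u₁) (g := u₂) v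
      rw [dist_eq_norm] at this
      calc L * (w v * ‖u₁ v - u₂ v‖) ≤ L * (w v * dist u₁ u₂) := by
            apply mul_le_mul_of_nonneg_left _ hL
            exact mul_le_mul_of_nonneg_left this (hwpos v).le
        _ = (L * dist u₁ u₂) * w v := by ring
    have h1 : ‖∫ v in (0:ℝ)..s, (F v (w v • u₁ v) - F v (w v • u₂ v))‖
        ≤ |∫ v in (0:ℝ)..s, (L * dist u₁ u₂) * w v| := by
      apply norm_intervalIntegral_le_abs s
        (((hFc _ (hsmulc u₁)).sub (hFc _ (hsmulc u₂)))) (continuous_const.mul hwc) hptwise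
    have h2 : |∫ v in (0:ℝ)..s, (L * dist u₁ u₂) * w v|
        ≤ (L * dist u₁ u₂) * ((Real.exp (K * |s|) - 1) / K) := by
      rw [intervalIntegral.integral_const_mul, abs_mul,
        abs_of_nonneg (by positivity : 0 ≤ L * dist u₁ u₂)]
      exact mul_le_mul_of_nonneg_left (abs_integral_exp_abs K hK s) (by positivity)
    have hexp1 : Real.exp (-(K * |s|)) * Real.exp (K * |s|) = 1 := by
      rw [← Real.exp_add]; simp
    calc Real.exp (-(K * |s|)) * ‖∫ v in (0:ℝ)..s, (F v (w v • u₁ v) - F v (w v • u₂ v))‖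
        ≤ Real.exp (-(K * |s|)) * ((L * dist u₁ u₂) * ((Real.exp (K * |s|) - 1) / K)) :=
          mul_le_mul_of_nonneg_left (h1.trans h2) (Real.exp_pos _).le
      _ = (L / K) * dist u₁ u₂
          - Real.exp (-(K * |s|)) * (L * dist u₁ u₂) / K := by
            linear_combination (L * dist u₁ u₂ / K) * hexp1
      _ ≤ (L / K) * dist u₁ u₂ := by
          have : 0 ≤ Real.exp (-(K * |s|)) * (L * dist u₁ u₂) / K := by positivity
          linarith
  have hLK : L / K < 1 := by
    rw [div_lt_one hK]; simp only [hKdef]; linarith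
  have hΦcontr : ContractingWith ⟨L / K, by positivity⟩ Φ := by
    constructor
    · exact_mod_cast hLK
    · exact LipschitzWith.of_dist_le_mul hcontr
  haveI : Nonempty (BoundedContinuousFunction ℝ E) := ⟨0⟩
  set u₀ : BoundedContinuousFunction ℝ E := ContractingWith.fixedPoint Φ hΦcontr with hu₀def
  have hu₀ : Φ u₀ = u₀ := hΦcontr.fixedPoint_isFixedPt
  set ψ : ℝ → E := fun s => w s • u₀ s with hψdef
  have hψc : Continuous ψ := hsmulc u₀
  have hψeq : ∀ s, ψ s = ∫ v in (0:ℝ)..s, F v (ψ v) := by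
    intro s
    have : u₀ s = Real.exp (-(K * |s|)) • ∫ v in (0:ℝ)..s, F v (w v • u₀ v) := by
      conv_lhs => rw [← hu₀]
      exact hΦapply u₀ s
    rw [hψdef]
    simp only
    rw [this, smul_smul, hwdef]
    rw [show Real.exp (K * |s|) * Real.exp (-(K * |s|)) = 1 by rw [← Real.exp_add]; simp,
      one_smul]
  refine ⟨ψ, ⟨hψc, hψeq⟩, ?_⟩
  -- uniqueness
  intro χ hχc hχeq
  have hχb : ∀ s, ‖χ s‖ ≤ M' * |s| := by
    intro s
    rw [hχeq s]
    have := intervalIntegral.norm_integral_le_of_norm_le_const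
      (C := M') (a := (0:ℝ)) (b := s)
      (f := fun v => F v (χ v)) (fun v _ => hFb v (χ v))
    simpa using this
  have huχb : ∀ s, ‖Real.exp (-(K * |s|)) • χ s‖ ≤ M' / K := by
    intro s
    have h2 : |s| ≤ Real.exp (K * |s|) / K := by
      rw [le_div_iff₀ hK]
      calc |s| * K = K * |s| := by ring
        _ ≤ Real.exp (K * |s|) := (Real.add_one_le_exp _).trans' (by linarith)
    rw [norm_smul, Real.norm_eq_abs, Real.abs_exp]
    calc Real.exp (-(K * |s|)) * ‖χ s‖
        ≤ Real.exp (-(K * |s|)) * (M' * (Real.exp (K * |s|) / K)) := by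
          apply mul_le_mul_of_nonneg_left _ (Real.exp_pos _).le
          exact (hχb s).trans (by nlinarith [h2, hM'0])
      _ = (Real.exp (-(K * |s|)) * Real.exp (K * |s|)) * (M' / K) := by ring
      _ = M' / K := by rw [← Real.exp_add]; simp
  set uχ : BoundedContinuousFunction ℝ E := BoundedContinuousFunction.ofNormedAddCommGroup
    (fun s => Real.exp (-(K * |s|)) • χ s)
    ((Real.continuous_exp.comp ((continuous_const.mul continuous_abs).neg)).smul hχc)
    (M' / K) huχb with huχdef
  have hfix : Function.IsFixedPt Φ uχ := by
    apply BoundedContinuousFunction.ext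
    intro s
    rw [hΦapply]
    have hcollapse : ∀ v : ℝ, w v • uχ v = χ v := by
      intro v
      show w v • (Real.exp (-(K * |v|)) • χ v) = χ v
      rw [smul_smul, hwdef]
      rw [show Real.exp (K * |v|) * Real.exp (-(K * |v|)) = 1 by rw [← Real.exp_add]; simp,
        one_smul]
    have : (fun v => F v (w v • uχ v)) = fun v => F v (χ v) := by
      funext v; rw [hcollapse]
    rw [this, ← hχeq s]
    rfl
  have : uχ = u₀ := hΦcontr.fixedPoint_unique hfix
  funext s
  have h1 : uχ s = u₀ s := by rw [this]
  have h2 : Real.exp (-(K * |s|)) • χ s = u₀ s := h1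
  calc χ s = w s • (Real.exp (-(K * |s|)) • χ s) := by
        rw [smul_smul, hwdef,
          show Real.exp (K * |s|) * Real.exp (-(K * |s|)) = 1 by rw [← Real.exp_add]; simp,
          one_smul]
    _ = w s • u₀ s := by rw [h2]
    _ = ψ s := rfl

end Aux

/-- Existence and uniqueness of the shift-type flow `W^s = θ_s W + φ_W(s)𝟙` driven by a
bounded, continuous functional `G` that is Lipschitz along constant shifts, together
with the flow property. -/
theorem stmt_2 (d : ℕ)
    (G : C(ℝ, EuclideanSpace ℝ (Fin d)) → EuclideanSpace ℝ (Fin d))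
    (hGb : ∃ M : ℝ, ∀ W, ‖G W‖ ≤ M) (hGc : Continuous G)
    (L : ℝ) (hL : 0 ≤ L)
    (hLip : ∀ (V : C(ℝ, EuclideanSpace ℝ (Fin d))) (x y : EuclideanSpace ℝ (Fin d)),
      ‖G (V + ContinuousMap.const ℝ x) - G (V + ContinuousMap.const ℝ y)‖ ≤ L * ‖x - y‖) :
    ∃ φ : C(ℝ, EuclideanSpace ℝ (Fin d)) → ℝ → EuclideanSpace ℝ (Fin d),
      -- (i) existence: for every `W`, `φ W` is a continuous solution of the integral equation
      (∀ W, Continuous (φ W) ∧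
        ∀ s : ℝ, φ W s = ∫ v in (0:ℝ)..s, G (pathShift v W + ContinuousMap.const ℝ (φ W v))) ∧
      -- (i) uniqueness
      (∀ (W : C(ℝ, EuclideanSpace ℝ (Fin d))) (ψ : ℝ → EuclideanSpace ℝ (Fin d)),
        Continuous ψ →
        (∀ s : ℝ, ψ s = ∫ v in (0:ℝ)..s, G (pathShift v W + ContinuousMap.const ℝ (ψ v))) →
        ψ = φ W) ∧
      -- (ii) `W^0 = W`
      (∀ W, pathShift 0 W + ContinuousMap.const ℝ (φ W 0) = W) ∧
      -- (ii) `(W^s)^v = W^{s+v}`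
      (∀ W (s v : ℝ),
        pathShift v (pathShift s W + ContinuousMap.const ℝ (φ W s)) +
            ContinuousMap.const ℝ (φ (pathShift s W + ContinuousMap.const ℝ (φ W s)) v)
          = pathShift (s + v) W + ContinuousMap.const ℝ (φ W (s + v))) ∧
      -- (ii) equivalently, `φ_W(s+v) = φ_W(s) + φ_{W^s}(v)`
      (∀ W (s v : ℝ),
        φ W (s + v) = φ W s + φ (pathShift s W + ContinuousMap.const ℝ (φ W s)) v) := by
  classical
  obtain ⟨M, hM⟩ := hGb
  have hkey := key d G M hM hGc L hL hLip
  choose φ hφ hφuniq using hkey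
  have hφc : ∀ W, Continuous (φ W) := fun W => (hφ W).1
  have hφeq : ∀ W s, φ W s
      = ∫ v in (0:ℝ)..s, G (pathShift v W + ContinuousMap.const ℝ (φ W v)) :=
    fun W => (hφ W).2
  have hφ0 : ∀ W, φ W 0 = 0 := by
    intro W; rw [hφeq W 0, intervalIntegral.integral_same]
  -- the flow identity on φ
  have hflow : ∀ W (s v : ℝ),
      φ W (s + v) = φ W s + φ (pathShift s W + ContinuousMap.const ℝ (φ W s)) v := by
    intro W s v
    set Ws := pathShift s W + ContinuousMap.const ℝ (φ W s) with hWs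
    -- candidate solution for Ws
    set χ : ℝ → EuclideanSpace ℝ (Fin d) := fun v => φ W (s + v) - φ W s with hχ
    have hχc : Continuous χ := ((hφc W).comp (continuous_const.add continuous_id)).sub
      continuous_const
    have hintW : ∀ a b : ℝ, IntervalIntegrable
        (fun v => G (pathShift v W + ContinuousMap.const ℝ (φ W v)))
        MeasureTheory.volume a b :=
      fun a b => (continuous_integrand G hGc W (φ W) (hφc W)).intervalIntegrable a b
    have hχeq : ∀ t : ℝ, χ t
        = ∫ u in (0:ℝ)..t, G (pathShift u Ws + ContinuousMap.const ℝ (χ u)) := by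
      intro t
      have h1 : χ t = ∫ r in s..(s + t),
          G (pathShift r W + ContinuousMap.const ℝ (φ W r)) := by
        rw [hχ]
        simp only
        rw [hφeq W (s + t), hφeq W s]
        rw [← intervalIntegral.integral_add_adjacent_intervals (hintW 0 s) (hintW s (s + t))]
        abel
      have h2 : (∫ r in s..(s + t), G (pathShift r W + ContinuousMap.const ℝ (φ W r)))
          = ∫ u in (0:ℝ)..t, G (pathShift (s + u) W + ContinuousMap.const ℝ (φ W (s + u))) := by
        rw [intervalIntegral.integral_comp_add_left
          (fun r => G (pathShift r W + ContinuousMap.const ℝ (φ W r))) s]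
        norm_num
      have h3 : ∀ u : ℝ, G (pathShift (s + u) W + ContinuousMap.const ℝ (φ W (s + u)))
          = G (pathShift u Ws + ContinuousMap.const ℝ (χ u)) := by
        intro u
        have harg : pathShift u Ws + ContinuousMap.const ℝ (χ u)
            = pathShift (s + u) W + ContinuousMap.const ℝ (φ W (s + u)) := by
          rw [hWs, pathShift_add_const, pathShift_pathShift, hχ]
          ext r : 1
          show pathShift (s + u) W r + φ W s + (φ W (s + u) - φ W s)
            = pathShift (s + u) W r + φ W (s + u)
          abel
        rw [harg]
      rw [h1, h2]
      exact intervalIntegral.integral_congr (fun u _ => h3 u)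
    have := hφuniq Ws χ hχc hχeq
    have hv := congrFun this v
    rw [hχ] at hv
    simp only at hv
    rw [← hv]
    abel
  refine ⟨φ, fun W => ⟨hφc W, hφeq W⟩, hφuniq, ?_, ?_, hflow⟩
  · intro W
    rw [pathShift_zero, hφ0]
    ext t
    simp
  · intro W s v
    rw [pathShift_add_const, pathShift_pathShift, hflow W s v]
    ext t
    simp [ContinuousMap.add_apply]
    abel
end

section
/- Under the stated hypotheses on F, for every s ∈ ℝ the map x ↦ φ(s,x) is differentiable on ℝ^N; for each fixed x ∈ ℝ^N the derivative Z(s) := D_xφ(s,x) is continuously differentiable in s and is the unique solution of the variational equation Z'(s) = D_xF(s, φ(s,x) + x) ∘ (Z(s) + Id), Z(0) = 0. In particular the mixed derivatives agree: ∂_s D_xφ(s,x) = D_x ∂_sφ(s,x) for all s ∈ ℝ and x ∈ ℝ^N. -/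
section Aux
open MeasureTheory Filter Topology Set intervalIntegral Nat

/-- Two-sided Grönwall estimate around `0`. -/
lemma gronwall_abs {B : Type*} [NormedAddCommGroup B] [NormedSpace ℝ B]
    {f f' : ℝ → B} (hf : ∀ t, HasDerivAt f (f' t) t)
    {K ε δ T : ℝ}
    (hbound : ∀ t : ℝ, |t| ≤ T → ‖f' t‖ ≤ K * ‖f t‖ + ε)
    (h0 : ‖f 0‖ ≤ δ) :
    ∀ s : ℝ, |s| ≤ T → ‖f s‖ ≤ gronwallBound δ K ε |s| := by
  have key : ∀ (g g' : ℝ → B), (∀ t, HasDerivAt g (g' t) t) →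
      (∀ t : ℝ, |t| ≤ T → ‖g' t‖ ≤ K * ‖g t‖ + ε) → ‖g 0‖ ≤ δ →
      ∀ s : ℝ, 0 ≤ s → s ≤ T → ‖g s‖ ≤ gronwallBound δ K ε s := by
    intro g g' hg hgb hg0 s hs0 hsT
    have := norm_le_gronwallBound_of_norm_deriv_right_le
      (f := g) (f' := g') (a := 0) (b := s) (δ := δ) (K := K) (ε := ε)
      (fun t _ => (hg t).continuousAt.continuousWithinAt)
      (fun t _ => (hg t).hasDerivWithinAt) hg0
      (fun t ht => hgb t (by rw [abs_le]; constructor <;> nlinarith [ht.1, ht.2]))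
      s ⟨hs0, le_rfl⟩
    simpa using this
  intro s hsT
  rcases le_or_gt 0 s with hs | hs
  · have := key f f' hf hbound h0 s hs (by rwa [abs_of_nonneg hs] at hsT)
    rwa [abs_of_nonneg hs]
  · have hneg : ∀ t : ℝ, HasDerivAt (fun u => f (-u)) (-f' (-t)) t := by
      intro t
      have := (hf (-t)).scomp t (hasDerivAt_neg t)
      simpa [Function.comp_def] using this
    have := key (fun u => f (-u)) (fun u => -f' (-u)) hneg
      (fun t ht => by
        simpa using hbound (-t) (by rw [abs_neg]; exact ht)) (by simpa using h0)
      (-s) (by linarith) (by rwa [abs_of_neg hs] at hsT)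
    rw [abs_of_neg hs]
    simpa using this


/-- FTC for continuous integrands. -/
lemma ftc_cont {B : Type*} [NormedAddCommGroup B] [NormedSpace ℝ B] [CompleteSpace B]
    {f : ℝ → B} (hf : Continuous f) (s : ℝ) :
    HasDerivAt (fun u => ∫ t in (0:ℝ)..u, f t) (f s) s :=
  integral_hasDerivAt_right (hf.intervalIntegrable 0 s)
    (hf.stronglyMeasurableAtFilter _ _) hf.continuousAt

/-- `|∫_0^s |t|^n dt| ≤ |s|^(n+1)/(n+1)`. -/
lemma abs_integral_abs_pow_le (n : ℕ) (s : ℝ) :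
    |∫ t in (0:ℝ)..s, |t| ^ n| ≤ |s| ^ (n + 1) / (n + 1) := by
  have hpos : ∀ s : ℝ, 0 ≤ s → (∫ t in (0:ℝ)..s, |t| ^ n) = s ^ (n+1) / (n+1) := by
    intro s hs
    rw [intervalIntegral.integral_congr (g := fun t => t ^ n)
      (fun t ht => by
        rw [Set.uIcc_of_le hs] at ht
        simp [abs_of_nonneg ht.1]),
      integral_pow]
    ring
  rcases le_or_gt 0 s with hs | hs
  · rw [hpos s hs, abs_of_nonneg hs, abs_of_nonneg (by positivity)]
  · have h1 : (∫ t in (0:ℝ)..s, |t| ^ n) = - ∫ t in (0:ℝ)..(-s), |t| ^ n := by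
      have := intervalIntegral.integral_comp_neg (a := (0:ℝ)) (b := -s)
        (fun t => |t| ^ n)
      simp only [abs_neg, neg_neg, neg_zero] at this
      have h2 := intervalIntegral.integral_symm (a := (0:ℝ)) (b := s)
        (f := fun t => |t| ^ n) (μ := MeasureTheory.volume)
      linarith [this, h2]
    rw [h1, abs_neg, hpos (-s) (by linarith), abs_of_neg hs]
    rw [abs_of_nonneg (div_nonneg (pow_nonneg (by linarith) _) (by positivity))]

variable {B : Type*} [NormedAddCommGroup B] [NormedSpace ℝ B] [CompleteSpace B]

/-- Picard iterates for the affine-linear ODE `Z' = A Z + b`, `Z 0 = 0`. -/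
noncomputable def picard (A : ℝ → B →L[ℝ] B) (b : ℝ → B) : ℕ → ℝ → B
  | 0 => fun s => ∫ t in (0:ℝ)..s, b t
  | (n+1) => fun s => ∫ t in (0:ℝ)..s, A t (picard A b n t)

lemma picard_cont {A : ℝ → B →L[ℝ] B} {b : ℝ → B} (hA : Continuous A)
    (hb : Continuous b) : ∀ n, Continuous (picard A b n) := by
  intro n
  induction n with
  | zero => exact continuous_iff_continuousAt.2 fun s => (ftc_cont hb s).continuousAt
  | succ n ih =>
    exact continuous_iff_continuousAt.2 fun s => (ftc_cont (hA.clm_apply ih) s).continuousAt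

lemma picard_deriv_zero {A : ℝ → B →L[ℝ] B} {b : ℝ → B} (hb : Continuous b) (s : ℝ) :
    HasDerivAt (picard A b 0) (b s) s := ftc_cont hb s

lemma picard_deriv_succ {A : ℝ → B →L[ℝ] B} {b : ℝ → B} (hA : Continuous A)
    (hb : Continuous b) (n : ℕ) (s : ℝ) :
    HasDerivAt (picard A b (n+1)) (A s (picard A b n s)) s :=
  ftc_cont (hA.clm_apply (picard_cont hA hb n)) s

lemma mem_uIoc_abs_s5 {x s : ℝ} (h : x ∈ Set.uIoc (0:ℝ) s) : |x| ≤ |s| := by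
  rcases le_or_gt 0 s with hs | hs
  · rw [Set.uIoc_of_le hs] at h
    rw [abs_of_pos h.1, abs_of_nonneg hs]; exact h.2
  · rw [Set.uIoc_of_ge hs.le] at h
    rw [abs_of_nonpos h.2, abs_of_neg hs]; linarith [h.1]

lemma picard_bound {A : ℝ → B →L[ℝ] B} {b : ℝ → B} (hA : Continuous A)
    (hb : Continuous b) {T K C : ℝ} (hK : 0 ≤ K) (hC : 0 ≤ C)
    (hKb : ∀ t : ℝ, |t| ≤ T → ‖A t‖ ≤ K) (hCb : ∀ t : ℝ, |t| ≤ T → ‖b t‖ ≤ C) :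
    ∀ n, ∀ s : ℝ, |s| ≤ T → ‖picard A b n s‖ ≤ C * K^n * |s|^(n+1) / (n+1)! := by
  intro n
  induction n with
  | zero =>
    intro s hs
    have := intervalIntegral.norm_integral_le_of_norm_le_const
      (f := b) (a := 0) (b := s) (C := C)
      (fun t ht => hCb t ((mem_uIoc_abs_s5 ht).trans hs))
    simpa [Nat.factorial, picard] using this
  | succ n ih =>
    intro s hs
    have key := intervalIntegral.norm_integral_le_abs_of_norm_le
      (f := fun t => A t (picard A b n t)) (a := 0) (b := s)
      (g := fun t => (C * K^(n+1) / (n+1)!) * |t|^(n+1)) (μ := MeasureTheory.volume)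
      (by
        refine (MeasureTheory.ae_restrict_mem measurableSet_uIoc).mono fun t ht => ?_
        have habs : |t| ≤ T := (mem_uIoc_abs_s5 ht).trans hs
        calc ‖A t (picard A b n t)‖ ≤ ‖A t‖ * ‖picard A b n t‖ :=
              (A t).le_opNorm _
          _ ≤ K * (C * K^n * |t|^(n+1) / (n+1)!) := by
              apply mul_le_mul (hKb t habs) (ih t habs) (norm_nonneg _) hK
          _ = (C * K^(n+1) / (n+1)!) * |t|^(n+1) := by ring)
      (by
        apply Continuous.intervalIntegrable
        exact continuous_const.mul ((continuous_abs).pow _))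
    rw [intervalIntegral.integral_const_mul] at key
    have h2 : |C * K^(n+1) / (n+1)! * ∫ t in (0:ℝ)..s, |t|^(n+1)|
        ≤ (C * K^(n+1) / (n+1)!) * (|s|^(n+1+1) / ((n+1 : ℕ)+1)) := by
      rw [abs_mul, abs_of_nonneg (by positivity : (0:ℝ) ≤ C * K^(n+1) / (n+1)!)]
      exact mul_le_mul_of_nonneg_left (abs_integral_abs_pow_le (n+1) s) (by positivity)
    refine (key.trans h2).trans (le_of_eq ?_)
    have h1 : (0:ℝ) < ((n+1)! : ℕ) := Nat.cast_pos.mpr (Nat.factorial_pos _)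
    have hfac : (((n+1+1)! : ℕ) : ℝ) = ((n:ℝ)+2) * ((n+1)! : ℕ) := by
      rw [Nat.factorial_succ]; push_cast; ring
    rw [hfac]
    have h2 : ((n:ℝ)+2) ≠ 0 := by positivity
    push_cast
    field_simp
    ring

/-- Global existence for the affine-linear ODE `Z' = A s (Z s) + b s`, `Z 0 = 0`. -/
lemma exists_affine_ode (A : ℝ → B →L[ℝ] B) (hA : Continuous A)
    (b : ℝ → B) (hb : Continuous b) :
    ∃ Z : ℝ → B, Z 0 = 0 ∧ ∀ s, HasDerivAt Z (A s (Z s) + b s) s := by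
  classical
  refine ⟨fun s => ∑' n, picard A b n s, ?_, ?_⟩
  · have h0 : ∀ n, picard A b n 0 = 0 := by
      intro n; cases n <;> simp [picard]
    simp [h0]
  · intro s₀
    set T : ℝ := |s₀| + 1 with hT
    have hT1 : (1:ℝ) ≤ T := by simp [hT]
    -- bounds for A and b on [-T, T]
    obtain ⟨K₀, hK₀⟩ := (isCompact_Icc (a := -T) (b := T)).exists_bound_of_continuousOn
      hA.continuousOn
    obtain ⟨C₀, hC₀⟩ := (isCompact_Icc (a := -T) (b := T)).exists_bound_of_continuousOn
      hb.continuousOn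
    set K : ℝ := max K₀ 0 with hKdef
    set C : ℝ := max C₀ 0 with hCdef
    have hK : 0 ≤ K := le_max_right _ _
    have hC : 0 ≤ C := le_max_right _ _
    have hKb : ∀ t : ℝ, |t| ≤ T → ‖A t‖ ≤ K := fun t ht =>
      (hK₀ t (abs_le.1 ht)).trans (le_max_left _ _)
    have hCb : ∀ t : ℝ, |t| ≤ T → ‖b t‖ ≤ C := fun t ht =>
      (hC₀ t (abs_le.1 ht)).trans (le_max_left _ _)
    have hbnd := picard_bound hA hb hK hC hKb hCb
    -- derivative functions
    set g' : ℕ → ℝ → B := fun n => Nat.casesOn n b (fun m t => A t (picard A b m t))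
      with hg'def
    set u : ℕ → ℝ := fun n => C * T * (K * T) ^ n / n ! with hudef
    have hu : Summable u := by
      have := (Real.summable_pow_div_factorial (K * T)).mul_left (C * T)
      simpa [hudef, mul_div_assoc] using this
    have habsT : ∀ t : ℝ, t ∈ Set.Ioo (-T) T → |t| ≤ T := fun t ht =>
      (abs_lt.2 ⟨ht.1, ht.2⟩).le
    have hg : ∀ n (y : ℝ), y ∈ Set.Ioo (-T) T → HasDerivAt (picard A b n) (g' n y) y := by
      intro n y _
      cases n with
      | zero => exact picard_deriv_zero hb y
      | succ m => exact picard_deriv_succ hA hb m y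
    have hg' : ∀ n (y : ℝ), y ∈ Set.Ioo (-T) T → ‖g' n y‖ ≤ u n := by
      intro n y hy
      have hyT := habsT y hy
      cases n with
      | zero =>
        calc ‖b y‖ ≤ C := hCb y hyT
          _ ≤ C * T * (K * T) ^ 0 / 0! := by
              simp [Nat.factorial]
              nlinarith
          _ = u 0 := rfl
      | succ m =>
        calc ‖A y (picard A b m y)‖ ≤ ‖A y‖ * ‖picard A b m y‖ := (A y).le_opNorm _
          _ ≤ K * (C * K ^ m * |y| ^ (m+1) / (m+1)!) :=
              mul_le_mul (hKb y hyT) (hbnd m y hyT) (norm_nonneg _) hK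
          _ ≤ u (m+1) := by
              show _ ≤ C * T * (K * T) ^ (m+1) / (((m+1)! : ℕ) : ℝ)
              have heq : K * (C * K ^ m * |y| ^ (m + 1) / (((m+1)! : ℕ) : ℝ))
                  = (K * (C * K ^ m * |y| ^ (m + 1))) / (((m+1)! : ℕ) : ℝ) := by ring
              rw [heq]
              apply div_le_div_of_nonneg_right _ (by positivity)
              have h1 : |y| ^ (m+1) ≤ T ^ (m+1) := pow_le_pow_left₀ (abs_nonneg y) hyT _
              have h4 : (0:ℝ) ≤ C * K^(m+1) * T^(m+1) := by positivity
              calc K * (C * K ^ m * |y| ^ (m + 1)) = C * K^(m+1) * |y|^(m+1) := by ring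
                _ ≤ C * K^(m+1) * T^(m+1) := mul_le_mul_of_nonneg_left h1 (by positivity)
                _ = C * K^(m+1) * T^(m+1) * 1 := (mul_one _).symm
                _ ≤ C * K^(m+1) * T^(m+1) * T := mul_le_mul_of_nonneg_left hT1 h4
                _ = C * T * (K * T) ^ (m+1) := by rw [mul_pow]; ring
    have hmem : s₀ ∈ Set.Ioo (-T) T := by
      rw [hT]
      constructor
      · nlinarith [abs_nonneg s₀, neg_abs_le s₀]
      · nlinarith [le_abs_self s₀]
    have h00 : (0:ℝ) ∈ Set.Ioo (-T) T := by
      constructor <;> [linarith; linarith]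
    have hg0 : Summable fun n => picard A b n 0 := by
      have h0 : ∀ n, picard A b n (0:ℝ) = 0 := by
        intro n; cases n <;> simp [picard]
      simp only [h0]
      exact summable_zero
    have hder := hasDerivAt_tsum_of_isPreconnected hu isOpen_Ioo
      (isPreconnected_Ioo) hg hg' h00 hg0 hmem
    -- identify the derivative
    have hsum_g' : Summable fun n => g' n s₀ :=
      Summable.of_norm_bounded hu (fun n => hg' n s₀ hmem)
    have hsum_p : Summable fun n => picard A b n s₀ := by
      apply summable_of_summable_hasDerivAt_of_isPreconnected hu isOpen_Ioo
        isPreconnected_Ioo hg hg' h00 hg0 hmem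
    have hkey : ∑' n, g' n s₀ = A s₀ (∑' n, picard A b n s₀) + b s₀ := by
      rw [Summable.tsum_eq_zero_add hsum_g']
      have : ∑' n, g' (n+1) s₀ = A s₀ (∑' n, picard A b n s₀) :=
        ((A s₀).map_tsum hsum_p).symm
      rw [this]
      exact add_comm _ _
    rw [hkey] at hder
    exact hder

end Aux

open MeasureTheory Filter Topology

theorem stmt_5_aux {E : Type*} [NormedAddCommGroup E] [NormedSpace ℝ E] [CompleteSpace E] [ProperSpace E]
    (F : ℝ → E → E) (φ : ℝ → E → E)
    (hFc : Continuous (fun p : ℝ × E => F p.1 p.2))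
    (hFd : ∀ s : ℝ, Differentiable ℝ (F s))
    (hDFc : Continuous (fun p : ℝ × E => fderiv ℝ (F p.1) p.2))
    (hbd : ∀ s₀ > (0:ℝ), ∃ M : ℝ, ∀ s ∈ Set.Icc (-s₀) s₀,
      ∀ x : E, ‖F s x‖ ≤ M ∧ ‖fderiv ℝ (F s) x‖ ≤ M)
    (hφ0 : ∀ x, φ 0 x = 0)
    (hφ' : ∀ (s : ℝ) (x : E),
      HasDerivAt (fun t => φ t x) (F s (φ s x + x)) s) :
    (∀ s : ℝ, Differentiable ℝ (φ s)) ∧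
    (∀ x : E,
      ContDiff ℝ 1 (fun s : ℝ => fderiv ℝ (φ s) x) ∧
      fderiv ℝ (φ 0) x = 0 ∧
      (∀ s : ℝ,
        HasDerivAt (fun t : ℝ => fderiv ℝ (φ t) x)
          ((fderiv ℝ (F s) (φ s x + x)).comp
            (fderiv ℝ (φ s) x + ContinuousLinearMap.id ℝ E)) s) ∧
      (∀ Z : ℝ → E →L[ℝ] E,
        Z 0 = 0 →
        (∀ s : ℝ,
          HasDerivAt Z
            ((fderiv ℝ (F s) (φ s x + x)).comp
              (Z s + ContinuousLinearMap.id ℝ E)) s) →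
        Z = fun s => fderiv ℝ (φ s) x)) ∧
    (∀ (s : ℝ) (x : E),
      deriv (fun t : ℝ => fderiv ℝ (φ t) x) s = fderiv ℝ (fun y => F s (φ s y + y)) x) := by

  -- the coefficient of the variational equation
  set A : E → ℝ → (E →L[ℝ] E) := fun x s => fderiv ℝ (F s) (φ s x + x) with hAdef
  have hφcont : ∀ x, Continuous (fun t => φ t x) := fun x =>
    continuous_iff_continuousAt.2 fun t => (hφ' t x).continuousAt
  have hAc : ∀ x, Continuous (A x) := by
    intro x
    have : Continuous (fun s : ℝ => (s, φ s x + x)) :=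
      continuous_id.prodMk ((hφcont x).add continuous_const)
    exact hDFc.comp this
  -- uniform bounds on compact time intervals
  have hKbd : ∀ T : ℝ, 1 ≤ T → ∃ K : ℝ, 1 ≤ K ∧
      (∀ t : ℝ, |t| ≤ T → ∀ y : E, ‖fderiv ℝ (F t) y‖ ≤ K) := by
    intro T hT
    obtain ⟨M, hM⟩ := hbd T (by linarith)
    exact ⟨max M 1, le_max_right _ _, fun t ht y =>
      ((hM t (abs_le.1 ht) y).2).trans (le_max_left _ _)⟩
  -- Lipschitz estimates for F
  have hLip : ∀ (K t : ℝ), (∀ y : E, ‖fderiv ℝ (F t) y‖ ≤ K) →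
      ∀ a c : E, ‖F t a - F t c‖ ≤ K * ‖a - c‖ := by
    intro K t hK a c
    exact Convex.norm_image_sub_le_of_norm_fderiv_le
      (fun y _ => (hFd t y)) (fun y _ => hK y) convex_univ (Set.mem_univ c) (Set.mem_univ a)
  -- main construction : for every x a global solution Z of the variational
  -- equation which is the fderiv of φ at x
  have main : ∀ x : E, ∃ Z : ℝ → (E →L[ℝ] E), Z 0 = 0 ∧
      (∀ s, HasDerivAt Z ((A x s).comp (Z s + ContinuousLinearMap.id ℝ E)) s) ∧
      (∀ s, HasFDerivAt (φ s) (Z s) x) := by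
    intro x
    obtain ⟨Z, hZ0, hZd⟩ := exists_affine_ode
      (fun s => (ContinuousLinearMap.compL ℝ E E E) (A x s))
      ((ContinuousLinearMap.compL ℝ E E E).continuous.comp (hAc x))
      (A x) (hAc x)
    have hZd' : ∀ s, HasDerivAt Z ((A x s).comp (Z s + ContinuousLinearMap.id ℝ E)) s := by
      intro s
      have heq : (ContinuousLinearMap.compL ℝ E E E) (A x s) (Z s) + A x s
          = (A x s).comp (Z s + ContinuousLinearMap.id ℝ E) := by
        rw [ContinuousLinearMap.comp_add, ContinuousLinearMap.comp_id]
        rfl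
      rw [← heq]; exact hZd s
    refine ⟨Z, hZ0, hZd', ?_⟩
    intro s₀
    -- set up constants
    set T : ℝ := |s₀| + 1 with hT
    have hT1 : (1:ℝ) ≤ T := by simp [hT]
    have hs₀T : |s₀| ≤ T := by simp [hT]
    obtain ⟨K, hK1, hKb⟩ := hKbd T hT1
    have hKpos : (0:ℝ) < K := by linarith
    set L : ℝ := Real.exp (K * T) with hL
    have hL1 : (1:ℝ) ≤ L := Real.one_le_exp (by positivity)
    have hLpos : (0:ℝ) < L := by linarith
    -- Lipschitz continuity of φ in the initial point (Grönwall)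
    have hgron : ∀ y : E, ∀ t : ℝ, |t| ≤ T →
        ‖(φ t y + y) - (φ t x + x)‖ ≤ ‖y - x‖ * L := by
      intro y t ht
      have hg : ∀ u : ℝ, HasDerivAt (fun r => (φ r y + y) - (φ r x + x))
          ((F u (φ u y + y)) - (F u (φ u x + x))) u := fun u =>
        ((hφ' u y).add_const y).sub ((hφ' u x).add_const x)
      have hb : ∀ u : ℝ, |u| ≤ T →
          ‖(F u (φ u y + y)) - (F u (φ u x + x))‖ ≤
            K * ‖(φ u y + y) - (φ u x + x)‖ + 0 := by
        intro u hu
        rw [add_zero]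
        exact hLip K u (hKb u hu) _ _
      have h0 : ‖(φ 0 y + y) - (φ 0 x + x)‖ ≤ ‖y - x‖ := by
        simp [hφ0]
      have := gronwall_abs hg hb h0 t ht
      rw [gronwallBound_ε0] at this
      refine this.trans ?_
      apply mul_le_mul_of_nonneg_left _ (norm_nonneg _)
      exact Real.exp_le_exp.2 (mul_le_mul_of_nonneg_left ht hKpos.le)
    -- uniform continuity of DF on a compact set
    obtain ⟨B₀, hB₀⟩ := (isCompact_Icc (a := -T) (b := T)).exists_bound_of_continuousOn
      (Continuous.continuousOn ((hφcont x).add continuous_const))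
    set Bd : ℝ := B₀ + 1 with hBd
    have hB₀0 : (0:ℝ) ≤ B₀ := le_trans (norm_nonneg _) (hB₀ 0 (Set.mem_Icc.2 ⟨by linarith, by linarith⟩))
    have hScomp : IsCompact ((Set.Icc (-T) T) ×ˢ (Metric.closedBall (0:E) Bd)) :=
      isCompact_Icc.prod (isCompact_closedBall _ _)
    have hUC : UniformContinuousOn (fun p : ℝ × E => fderiv ℝ (F p.1) p.2)
        ((Set.Icc (-T) T) ×ˢ (Metric.closedBall (0:E) Bd)) :=
      hScomp.uniformContinuousOn_of_continuous hDFc.continuousOn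
    rw [Metric.uniformContinuousOn_iff] at hUC
    -- the little-o estimate
    refine HasFDerivAt.of_isLittleO (Asymptotics.isLittleO_iff.2 ?_)
    intro c hc
    set ε : ℝ := c * K / (L * L) with hε
    have hεpos : 0 < ε := by positivity
    obtain ⟨δ, hδpos, hδ⟩ := hUC ε hεpos
    set η : ℝ := min (δ / (2 * L)) (1 / L) with hη
    have hηpos : 0 < η := by positivity
    rw [Metric.eventually_nhds_iff]
    refine ⟨η, hηpos, ?_⟩
    intro y hy
    rw [dist_eq_norm] at hy
    -- g, θ and their properties
    set g : ℝ → E := fun t => (φ t y + y) - (φ t x + x) with hgdef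
    set θ : ℝ → E := fun t => φ t y - φ t x - Z t (y - x) with hθdef
    have hgsmall : ∀ t : ℝ, |t| ≤ T → ‖g t‖ ≤ δ / 2 ∧ ‖g t‖ ≤ 1 := by
      intro t ht
      have h1 := hgron y t ht
      constructor
      · refine h1.trans ?_
        have : ‖y - x‖ ≤ δ / (2 * L) := le_of_lt (lt_of_lt_of_le hy (min_le_left _ _))
        calc ‖y - x‖ * L ≤ (δ / (2 * L)) * L :=
              mul_le_mul_of_nonneg_right this hLpos.le
          _ = δ / 2 := by field_simp
      · refine h1.trans ?_
        have : ‖y - x‖ ≤ 1 / L := le_of_lt (lt_of_lt_of_le hy (min_le_right _ _))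
        calc ‖y - x‖ * L ≤ (1 / L) * L := mul_le_mul_of_nonneg_right this hLpos.le
          _ = 1 := by field_simp
    -- the remainder estimate
    have hR : ∀ t : ℝ, |t| ≤ T →
        ‖F t (φ t y + y) - F t (φ t x + x) - (A x t) (g t)‖ ≤ ε * ‖g t‖ := by
      intro t ht
      set p : E := φ t x + x with hp
      have hpB : ‖p‖ ≤ B₀ := hB₀ t (abs_le.1 ht)
      have hDFnear : ∀ u : E, u ∈ Metric.closedBall p ‖g t‖ →
          ‖fderiv ℝ (F t) u - A x t‖ ≤ ε := by
        intro u hu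
        rw [Metric.mem_closedBall] at hu
        have huB : u ∈ Metric.closedBall (0:E) Bd := by
          rw [Metric.mem_closedBall, dist_zero_right]
          calc ‖u‖ = ‖(u - p) + p‖ := by rw [sub_add_cancel]
            _ ≤ ‖u - p‖ + ‖p‖ := norm_add_le _ _
            _ ≤ ‖g t‖ + B₀ := by
                rw [← dist_eq_norm]
                exact add_le_add hu hpB
            _ ≤ 1 + B₀ := add_le_add_left (hgsmall t ht).2 _
            _ = Bd := by rw [hBd]; ring
        have hpB' : p ∈ Metric.closedBall (0:E) Bd := by
          rw [Metric.mem_closedBall, dist_zero_right]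
          calc ‖p‖ ≤ B₀ := hpB
            _ ≤ Bd := by rw [hBd]; linarith
        have hdist : dist ((t, u) : ℝ × E) ((t, p) : ℝ × E) < δ := by
          rw [Prod.dist_eq]
          simp only [dist_self]
          rw [max_lt_iff]
          constructor
          · exact hδpos
          · calc dist u p ≤ ‖g t‖ := hu
              _ ≤ δ / 2 := (hgsmall t ht).1
              _ < δ := by linarith
        have := hδ (t, u) ⟨abs_le.1 ht, huB⟩ (t, p) ⟨abs_le.1 ht, hpB'⟩ hdist
        rw [dist_eq_norm] at this
        exact this.le
      -- mean value inequality for u ↦ F t u - A x t u on the ball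
      have hyy : φ t y + y = p + g t := by simp only [hgdef, hp]; abel
      have hmem1 : p ∈ Metric.closedBall p ‖g t‖ :=
        Metric.mem_closedBall_self (norm_nonneg _)
      have hmem2 : p + g t ∈ Metric.closedBall p ‖g t‖ := by
        rw [Metric.mem_closedBall, dist_eq_norm, add_sub_cancel_left]
      have hmv := Convex.norm_image_sub_le_of_norm_fderiv_le
        (f := fun u => F t u - (A x t) u) (C := ε) (s := Metric.closedBall p ‖g t‖)
        (fun u _ => ((hFd t u).sub ((A x t).differentiableAt)))
        (fun u hu => by
          rw [fderiv_fun_sub (hFd t u) ((A x t).differentiableAt),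
            ContinuousLinearMap.fderiv]
          exact hDFnear u hu)
        (convex_closedBall _ _) hmem1 hmem2
      have hmv' : ‖(F t (p + g t) - (A x t) (p + g t)) - (F t p - (A x t) p)‖
          ≤ ε * ‖p + g t - p‖ := hmv
      rw [map_add, add_sub_cancel_left] at hmv'
      calc ‖F t (φ t y + y) - F t p - (A x t) (g t)‖
          = ‖F t (p + g t) - ((A x t) p + (A x t) (g t)) - (F t p - (A x t) p)‖ := by
            rw [hyy]; congr 1; abel
        _ ≤ ε * ‖g t‖ := hmv'
    -- derivative of θ
    have hZap : ∀ t : ℝ, HasDerivAt (fun r => Z r (y - x))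
        (((A x t).comp (Z t + ContinuousLinearMap.id ℝ E)) (y - x)) t := by
      intro t
      have := (hZd' t).clm_apply (hasDerivAt_const t (y - x))
      simpa using this
    have hθ' : ∀ t : ℝ, HasDerivAt θ
        (F t (φ t y + y) - F t (φ t x + x)
          - ((A x t).comp (Z t + ContinuousLinearMap.id ℝ E)) (y - x)) t := fun t =>
      ((hφ' t y).sub (hφ' t x)).sub (hZap t)
    have hAb : ∀ t : ℝ, |t| ≤ T → ‖A x t‖ ≤ K := fun t ht => hKb t ht _
    have hθbound : ∀ t : ℝ, |t| ≤ T →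
        ‖F t (φ t y + y) - F t (φ t x + x)
          - ((A x t).comp (Z t + ContinuousLinearMap.id ℝ E)) (y - x)‖
          ≤ K * ‖θ t‖ + ε * L * ‖y - x‖ := by
      intro t ht
      have hsplit : F t (φ t y + y) - F t (φ t x + x)
          - ((A x t).comp (Z t + ContinuousLinearMap.id ℝ E)) (y - x)
          = (F t (φ t y + y) - F t (φ t x + x) - (A x t) (g t)) + (A x t) (θ t) := by
        have hθg : θ t = g t - (y - x) - Z t (y - x) := by
          simp only [hθdef, hgdef]; abel
        rw [hθg]
        simp only [ContinuousLinearMap.comp_apply, ContinuousLinearMap.add_apply,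
          ContinuousLinearMap.id_apply, map_sub, map_add]
        abel
      rw [hsplit]
      refine (norm_add_le _ _).trans ?_
      have h1 : ‖F t (φ t y + y) - F t (φ t x + x) - (A x t) (g t)‖
          ≤ ε * L * ‖y - x‖ := by
        refine (hR t ht).trans ?_
        calc ε * ‖g t‖ ≤ ε * (‖y - x‖ * L) :=
              mul_le_mul_of_nonneg_left (hgron y t ht) hεpos.le
          _ = ε * L * ‖y - x‖ := by ring
      have h2 : ‖(A x t) (θ t)‖ ≤ K * ‖θ t‖ :=
        le_trans ((A x t).le_opNorm _)
          (mul_le_mul_of_nonneg_right (hAb t ht) (norm_nonneg _))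
      linarith
    have hθ0 : ‖θ 0‖ ≤ (0:ℝ) := by
      simp [hθdef, hφ0, hZ0]
    have hgr := gronwall_abs hθ' hθbound hθ0 s₀ hs₀T
    have hfin : gronwallBound 0 K (ε * L * ‖y - x‖) |s₀| ≤ c * ‖y - x‖ := by
      rw [gronwallBound_of_K_ne_0 hKpos.ne']
      simp only [zero_mul, zero_add]
      have hexp : Real.exp (K * |s₀|) - 1 ≤ L := by
        have h3 : Real.exp (K * |s₀|) ≤ Real.exp (K * T) :=
          Real.exp_le_exp.2 (mul_le_mul_of_nonneg_left hs₀T hKpos.le)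
        rw [hL]; linarith
      have h0 : (0:ℝ) ≤ ε * L * ‖y - x‖ / K := by positivity
      calc ε * L * ‖y - x‖ / K * (Real.exp (K * |s₀|) - 1)
          ≤ ε * L * ‖y - x‖ / K * L := mul_le_mul_of_nonneg_left hexp h0
        _ = c * ‖y - x‖ := by
            rw [hε]; field_simp
    exact hgr.trans hfin
  choose Z hZ0 hZd hZf using main
  have hfd : ∀ (s : ℝ) (x : E), fderiv ℝ (φ s) x = Z x s := fun s x => (hZf x s).fderiv
  have hfun : ∀ x : E, (fun t : ℝ => fderiv ℝ (φ t) x) = Z x := fun x =>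
    funext fun t => hfd t x
  have hZode : ∀ (x : E) (s : ℝ), HasDerivAt (Z x)
      ((fderiv ℝ (F s) (φ s x + x)).comp (Z x s + ContinuousLinearMap.id ℝ E)) s :=
    fun x s => hZd x s
  have hZcont : ∀ x : E, Continuous (Z x) := fun x =>
    continuous_iff_continuousAt.2 fun s => (hZd x s).continuousAt
  refine ⟨fun s x => (hZf x s).differentiableAt, ?_, ?_⟩
  · intro x
    refine ⟨?_, ?_, ?_, ?_⟩
    · rw [hfun x]
      rw [contDiff_one_iff_deriv]
      refine ⟨fun s => (hZode x s).differentiableAt, ?_⟩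
      have hde : deriv (Z x) = fun s =>
          (A x s).comp (Z x s + ContinuousLinearMap.id ℝ E) :=
        funext fun s => (hZd x s).deriv
      rw [hde]
      have h1 : Continuous fun s => (ContinuousLinearMap.compL ℝ E E E) (A x s) :=
        (ContinuousLinearMap.compL ℝ E E E).continuous.comp (hAc x)
      exact h1.clm_apply ((hZcont x).add continuous_const)
    · rw [show φ 0 = fun _ : E => (0:E) from funext hφ0]
      simp
    · intro s
      rw [hfun x, hfd s x]
      exact hZode x s
    · intro W hW0 hWd
      rw [hfun x]
      funext s₁
      have hdiff : ∀ s : ℝ, HasDerivAt (fun t => W t - Z x t)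
          ((fderiv ℝ (F s) (φ s x + x)).comp (W s - Z x s)) s := by
        intro s
        have h := (hWd s).sub (hZode x s)
        have heq : (fderiv ℝ (F s) (φ s x + x)).comp (W s + ContinuousLinearMap.id ℝ E)
            - (fderiv ℝ (F s) (φ s x + x)).comp (Z x s + ContinuousLinearMap.id ℝ E)
            = (fderiv ℝ (F s) (φ s x + x)).comp (W s - Z x s) := by
          rw [← ContinuousLinearMap.comp_sub]
          congr 1
          abel
        rwa [heq] at h
      set T : ℝ := |s₁| + 1 with hT
      have hT1 : (1:ℝ) ≤ T := by simp [hT]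
      have hs₁T : |s₁| ≤ T := by simp [hT]
      obtain ⟨K, hK1, hKb⟩ := hKbd T hT1
      have hKpos : (0:ℝ) < K := by linarith
      have hbound : ∀ t : ℝ, |t| ≤ T →
          ‖(fderiv ℝ (F t) (φ t x + x)).comp (W t - Z x t)‖
            ≤ K * ‖W t - Z x t‖ + 0 := by
        intro t ht
        rw [add_zero]
        refine (ContinuousLinearMap.opNorm_comp_le _ _).trans ?_
        exact mul_le_mul_of_nonneg_right (hKb t ht _) (norm_nonneg _)
      have h0 : ‖W 0 - Z x 0‖ ≤ (0:ℝ) := by simp [hW0, hZ0 x]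
      have := gronwall_abs hdiff hbound h0 s₁ hs₁T
      rw [gronwallBound_ε0, zero_mul] at this
      have hz : W s₁ - Z x s₁ = 0 := by
        have h4 := norm_nonneg (W s₁ - Z x s₁)
        have h5 : ‖W s₁ - Z x s₁‖ = 0 := le_antisymm this h4
        exact norm_eq_zero.1 h5
      exact sub_eq_zero.1 hz
  · intro s x
    rw [hfun x, (hZode x s).deriv]
    have hinner : HasFDerivAt (fun y : E => φ s y + y)
        (Z x s + ContinuousLinearMap.id ℝ E) x :=
      (hZf x s).add (hasFDerivAt_id x)
    have houter : HasFDerivAt (F s) (fderiv ℝ (F s) (φ s x + x)) (φ s x + x) :=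
      (hFd s (φ s x + x)).hasFDerivAt
    have hcomp' := HasFDerivAt.comp (g := F s) (f := fun y : E => φ s y + y) x houter hinner
    have hcomp : HasFDerivAt (fun y : E => F s (φ s y + y))
        ((fderiv ℝ (F s) (φ s x + x)).comp (Z x s + ContinuousLinearMap.id ℝ E)) x := hcomp'
    rw [hcomp.fderiv]



/-- Differentiability of the solution `φ(s,·)` of `∂_sφ(s,x) = F(s, φ(s,x) + x)`,
`φ(0,x) = 0`, in the initial point, the variational equation for `Z(s) = D_xφ(s,x)`
(with uniqueness), and equality of the mixed derivatives. -/
theorem stmt_5 (N : ℕ)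
    (F : ℝ → EuclideanSpace ℝ (Fin N) → EuclideanSpace ℝ (Fin N))
    (φ : ℝ → EuclideanSpace ℝ (Fin N) → EuclideanSpace ℝ (Fin N))
    (hFc : Continuous (fun p : ℝ × EuclideanSpace ℝ (Fin N) => F p.1 p.2))
    (hFd : ∀ s : ℝ, Differentiable ℝ (F s))
    (hDFc : Continuous (fun p : ℝ × EuclideanSpace ℝ (Fin N) => fderiv ℝ (F p.1) p.2))
    (hbd : ∀ s₀ > (0:ℝ), ∃ M : ℝ, ∀ s ∈ Set.Icc (-s₀) s₀,
      ∀ x : EuclideanSpace ℝ (Fin N), ‖F s x‖ ≤ M ∧ ‖fderiv ℝ (F s) x‖ ≤ M)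
    (hφ0 : ∀ x, φ 0 x = 0)
    (hφ' : ∀ (s : ℝ) (x : EuclideanSpace ℝ (Fin N)),
      HasDerivAt (fun t => φ t x) (F s (φ s x + x)) s) :
    -- `x ↦ φ(s,x)` is differentiable
    (∀ s : ℝ, Differentiable ℝ (φ s)) ∧
    -- the variational equation for `Z(s) = D_xφ(s,x)`
    (∀ x : EuclideanSpace ℝ (Fin N),
      ContDiff ℝ 1 (fun s : ℝ => fderiv ℝ (φ s) x) ∧
      fderiv ℝ (φ 0) x = 0 ∧
      (∀ s : ℝ,
        HasDerivAt (fun t : ℝ => fderiv ℝ (φ t) x)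
          ((fderiv ℝ (F s) (φ s x + x)).comp
            (fderiv ℝ (φ s) x + ContinuousLinearMap.id ℝ (EuclideanSpace ℝ (Fin N)))) s) ∧
      -- uniqueness of the solution of the variational equation
      (∀ Z : ℝ → EuclideanSpace ℝ (Fin N) →L[ℝ] EuclideanSpace ℝ (Fin N),
        Z 0 = 0 →
        (∀ s : ℝ,
          HasDerivAt Z
            ((fderiv ℝ (F s) (φ s x + x)).comp
              (Z s + ContinuousLinearMap.id ℝ (EuclideanSpace ℝ (Fin N)))) s) →
        Z = fun s => fderiv ℝ (φ s) x)) ∧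
    -- the mixed derivatives agree: `∂_s D_xφ(s,x) = D_x ∂_sφ(s,x)`
    (∀ (s : ℝ) (x : EuclideanSpace ℝ (Fin N)),
      deriv (fun t : ℝ => fderiv ℝ (φ t) x) s = fderiv ℝ (fun y => F s (φ s y + y)) x) := by
  exact stmt_5_aux F φ hFc hFd hDFc hbd hφ0 hφ'
end

section
/- Let d ≥ 1 and λ ∈ (0,1) with λ ≠ 1/2. For every subexponential two-sided sequence (a_z)_{z∈ℤ} in ℝ^d there exists exactly one subexponential two-sided sequence (b_z)_{z∈ℤ} in ℝ^d such that λ b_{z−1} + (1−λ) b_z = a_z for every z ∈ ℤ. -/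
open Filter Topology

/-- A two-sided sequence `(c_z)_{z∈ℤ}` in `ℝ^d` is subexponential if
`log(1 + ‖c_z‖)/|z| → 0` as `|z| → ∞`. -/
def IsSubexponential {d : ℕ} (c : ℤ → EuclideanSpace ℝ (Fin d)) : Prop :=
  Tendsto (fun z : ℤ => Real.log (1 + ‖c z‖) / |(z : ℝ)|) cofinite (𝓝 0)

namespace Stmt9Aux

variable {d : ℕ}

lemma bound_of_subexp {c : ℤ → EuclideanSpace ℝ (Fin d)}
    (hc : IsSubexponential c) {ε : ℝ} (hε : 0 < ε) :
    ∃ C : ℝ, 1 ≤ C ∧ ∀ z : ℤ, 1 + ‖c z‖ ≤ C * Real.exp (ε * |(z : ℝ)|) := by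
  have hev : ∀ᶠ z in (cofinite : Filter ℤ),
      Real.log (1 + ‖c z‖) / |(z : ℝ)| < ε := hc.eventually (eventually_lt_nhds hε)
  have hfin : {z : ℤ | ¬ Real.log (1 + ‖c z‖) / |(z : ℝ)| < ε}.Finite :=
    Filter.eventually_cofinite.mp hev
  have hfin' := hfin.insert (0 : ℤ)
  set F := hfin'.toFinset with hF
  refine ⟨1 + ∑ z ∈ F, ‖c z‖, le_add_of_nonneg_right (Finset.sum_nonneg fun z _ => norm_nonneg _),
    fun z => ?_⟩
  have hCpos : (0:ℝ) < 1 + ∑ z ∈ F, ‖c z‖ := by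
    have := Finset.sum_nonneg (fun z (_ : z ∈ F) => norm_nonneg (c z)); linarith
  have hexp1 : (1:ℝ) ≤ Real.exp (ε * |(z : ℝ)|) :=
    Real.one_le_exp (by positivity)
  by_cases hz : z ∈ F
  · have hle : ‖c z‖ ≤ ∑ w ∈ F, ‖c w‖ :=
      Finset.single_le_sum (fun w _ => norm_nonneg (c w)) hz
    nlinarith
  · have hz0 : z ≠ 0 := by
      intro h; apply hz; rw [hF, Set.Finite.mem_toFinset]; exact Or.inl h
    have hzsm : Real.log (1 + ‖c z‖) / |(z : ℝ)| < ε := by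
      by_contra h
      exact hz (by rw [hF, Set.Finite.mem_toFinset]; exact Or.inr h)
    have habs : (0:ℝ) < |(z : ℝ)| := by
      simp only [abs_pos, ne_eq, Int.cast_eq_zero]; exact hz0
    have hlog : Real.log (1 + ‖c z‖) < ε * |(z : ℝ)| := by
      rw [div_lt_iff₀ habs] at hzsm; linarith [hzsm]
    have h1 : 1 + ‖c z‖ ≤ Real.exp (ε * |(z : ℝ)|) := by
      have := Real.exp_log (show (0:ℝ) < 1 + ‖c z‖ by positivity)
      rw [← this]
      exact le_of_lt (Real.exp_lt_exp.mpr hlog)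
    calc 1 + ‖c z‖ ≤ Real.exp (ε * |(z : ℝ)|) := h1
      _ ≤ (1 + ∑ z ∈ F, ‖c z‖) * Real.exp (ε * |(z : ℝ)|) :=
        le_mul_of_one_le_left (by positivity) (le_add_of_nonneg_right (Finset.sum_nonneg fun w _ => norm_nonneg _))

lemma subexp_of_bound {c : ℤ → EuclideanSpace ℝ (Fin d)}
    (h : ∀ ε : ℝ, 0 < ε → ∃ C : ℝ, 0 < C ∧ ∀ z : ℤ, ‖c z‖ ≤ C * Real.exp (ε * |(z : ℝ)|)) :
    IsSubexponential c := by
  rw [IsSubexponential, Metric.tendsto_nhds]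
  intro ε hε
  obtain ⟨C, hC0, hC⟩ := h (ε / 2) (by positivity)
  rw [Filter.eventually_cofinite]
  set L := Real.log (1 + C) with hLdef
  have hL0 : 0 ≤ L := Real.log_nonneg (by linarith)
  set N : ℤ := ⌈2 * L / ε⌉ with hN
  have hNR : 2 * L / ε ≤ (N : ℝ) := Int.le_ceil _
  have hN0 : (0:ℝ) ≤ (N : ℝ) := le_trans (by positivity) hNR
  apply Set.Finite.subset (Set.finite_Icc (-N) N)
  intro z hz
  simp only [Set.mem_setOf_eq, Real.dist_eq, sub_zero] at hz
  by_contra hmem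
  apply hz
  have hNz : N < |z| := by
    rcases lt_or_ge N |z| with h' | h'
    · exact h'
    · exfalso; rw [abs_le] at h'
      rw [Set.mem_Icc] at hmem
      omega
  have hzR : (N : ℝ) < |(z : ℝ)| := by
    rw [← Int.cast_abs]; exact_mod_cast hNz
  have habs : (0:ℝ) < |(z : ℝ)| := lt_of_le_of_lt hN0 hzR
  have hf0 : 0 ≤ Real.log (1 + ‖c z‖) / |(z : ℝ)| :=
    div_nonneg (Real.log_nonneg (by linarith [norm_nonneg (c z)])) (abs_nonneg _)
  rw [abs_of_nonneg hf0]
  set E := Real.exp (ε / 2 * |(z : ℝ)|) with hE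
  have hE1 : (1:ℝ) ≤ E := Real.one_le_exp (by positivity)
  have h1 : 1 + ‖c z‖ ≤ (1 + C) * E := by
    have := hC z
    nlinarith
  have h2 : Real.log (1 + ‖c z‖) ≤ L + ε / 2 * |(z : ℝ)| := by
    calc Real.log (1 + ‖c z‖) ≤ Real.log ((1 + C) * E) :=
          Real.log_le_log (by positivity) h1
      _ = L + ε / 2 * |(z : ℝ)| := by
          rw [Real.log_mul (by positivity) (by positivity), hE, Real.log_exp]
  have h3 : L < ε / 2 * |(z : ℝ)| := by
    have h4 : 2 * L < |(z : ℝ)| * ε := by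
      have := (div_lt_iff₀ hε).mp (lt_of_le_of_lt hNR hzR)
      linarith
    linarith
  rw [div_lt_iff₀ habs]
  linarith
  
lemma key_summable {μ C ε r : ℝ} (hμ : 0 < μ) (hC : 0 < C) (hε : 0 < ε)
    (hr : μ * Real.exp ε ≤ r) (hr1 : r < 1)
    {a : ℤ → EuclideanSpace ℝ (Fin d)}
    (hb : ∀ z : ℤ, ‖a z‖ ≤ C * Real.exp (ε * |(z : ℝ)|)) (z : ℤ) :
    Summable (fun k : ℕ => μ ^ k * ‖a (z - k)‖) ∧
      ∑' k : ℕ, μ ^ k * ‖a (z - k)‖ ≤ C * Real.exp (ε * |(z : ℝ)|) / (1 - r) := by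
  have hr0 : (0:ℝ) ≤ r := le_trans (by positivity) hr
  have hterm : ∀ k : ℕ, μ ^ k * ‖a (z - k)‖ ≤ C * Real.exp (ε * |(z : ℝ)|) * r ^ k := by
    intro k
    have habs : |((z - (k:ℤ) : ℤ) : ℝ)| ≤ |(z : ℝ)| + (k : ℝ) := by
      push_cast
      calc |(z:ℝ) - (k:ℝ)| ≤ |(z:ℝ)| + |(k:ℝ)| := abs_sub _ _
        _ = |(z:ℝ)| + (k:ℝ) := by rw [Nat.abs_cast]
    have h1 : ‖a (z - k)‖ ≤ C * Real.exp (ε * (|(z : ℝ)| + k)) := by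
      refine le_trans (hb _) ?_
      gcongr
    calc μ ^ k * ‖a (z - k)‖ ≤ μ ^ k * (C * Real.exp (ε * (|(z : ℝ)| + k))) := by
          gcongr
      _ = C * Real.exp (ε * |(z : ℝ)|) * (μ ^ k * Real.exp ε ^ k) := by
          rw [mul_add, Real.exp_add, show ε * (k:ℝ) = (k:ℝ) * ε from mul_comm _ _,
            Real.exp_nat_mul]
          ring
      _ = C * Real.exp (ε * |(z : ℝ)|) * (μ * Real.exp ε) ^ k := by rw [mul_pow]
      _ ≤ C * Real.exp (ε * |(z : ℝ)|) * r ^ k := by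
          gcongr
  have hgeo : Summable (fun k : ℕ => C * Real.exp (ε * |(z : ℝ)|) * r ^ k) :=
    (summable_geometric_of_lt_one hr0 hr1).mul_left _
  have hsum : Summable (fun k : ℕ => μ ^ k * ‖a (z - k)‖) :=
    Summable.of_nonneg_of_le (fun k => by positivity) hterm hgeo
  refine ⟨hsum, ?_⟩
  calc ∑' k : ℕ, μ ^ k * ‖a (z - k)‖ ≤ ∑' k : ℕ, C * Real.exp (ε * |(z : ℝ)|) * r ^ k :=
        Summable.tsum_le_tsum hterm hsum hgeo
    _ = C * Real.exp (ε * |(z : ℝ)|) * (1 - r)⁻¹ := by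
        rw [tsum_mul_left, tsum_geometric_of_lt_one hr0 hr1]
    _ = C * Real.exp (ε * |(z : ℝ)|) / (1 - r) := by rw [div_eq_mul_inv]

lemma exists_sol (lam : ℝ) (h0 : 0 < lam) (h2 : lam < 1 / 2)
    (a : ℤ → EuclideanSpace ℝ (Fin d)) (ha : IsSubexponential a) :
    ∃ b : ℤ → EuclideanSpace ℝ (Fin d), IsSubexponential b ∧
      ∀ z : ℤ, lam • b (z - 1) + (1 - lam) • b z = a z := by
  have hlam1 : (0:ℝ) < 1 - lam := by linarith
  set μ := lam / (1 - lam) with hμdef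
  have hμ0 : 0 < μ := by positivity
  have hμ1 : μ < 1 := by rw [hμdef, div_lt_one hlam1]; linarith
  set r : ℝ := (1 + μ) / 2 with hrdef
  have hμr : μ < r := by rw [hrdef]; linarith
  have hr1 : r < 1 := by rw [hrdef]; linarith
  have hr0 : 0 < r := lt_trans hμ0 hμr
  set ε₀ : ℝ := Real.log (r / μ) with hε₀def
  have hε₀ : 0 < ε₀ := Real.log_pos (by rw [lt_div_iff₀ hμ0]; linarith)
  have hexpε₀ : μ * Real.exp ε₀ = r := by
    rw [hε₀def, Real.exp_log (by positivity)]
    field_simp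
  have hratio : ∀ ε : ℝ, ε ≤ ε₀ → μ * Real.exp ε ≤ r := by
    intro ε hε
    calc μ * Real.exp ε ≤ μ * Real.exp ε₀ := by gcongr
      _ = r := hexpε₀
  have hnorm : ∀ (z : ℤ) (k : ℕ), ‖(-μ) ^ k • a (z - k)‖ = μ ^ k * ‖a (z - k)‖ := by
    intro z k
    rw [norm_smul, Real.norm_eq_abs, abs_pow, abs_neg, abs_of_pos hμ0]
  obtain ⟨C₀, hC₀1, hC₀⟩ := bound_of_subexp ha hε₀
  have hC₀' : ∀ w : ℤ, ‖a w‖ ≤ C₀ * Real.exp (ε₀ * |(w : ℝ)|) := fun w =>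
    le_trans (le_add_of_nonneg_left zero_le_one) (hC₀ w)
  have hsumn : ∀ z : ℤ, Summable (fun k : ℕ => μ ^ k * ‖a (z - k)‖) := fun z =>
    (key_summable hμ0 (by linarith) hε₀ (le_of_eq hexpε₀) hr1 hC₀' z).1
  have hsum : ∀ z : ℤ, Summable (fun k : ℕ => (-μ) ^ k • a (z - k)) := by
    intro z
    apply Summable.of_norm
    simp only [hnorm]
    exact hsumn z
  set S : ℤ → EuclideanSpace ℝ (Fin d) := fun z => ∑' k : ℕ, (-μ) ^ k • a (z - k) with hSdef
  set b : ℤ → EuclideanSpace ℝ (Fin d) := fun z => (1 - lam)⁻¹ • S z with hbdef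
  have hS : ∀ z : ℤ, S z = a z + (-μ) • S (z - 1) := by
    intro z
    rw [hSdef]
    simp only
    rw [Summable.tsum_eq_zero_add (hsum z)]
    congr 1
    · simp
    have hterm : ∀ k : ℕ, (-μ) ^ (k + 1) • a (z - ((k:ℕ) + 1 : ℕ)) =
        (-μ) • ((-μ) ^ k • a (z - 1 - k)) := by
      intro k
      rw [smul_smul, ← pow_succ']
      congr 2
      push_cast
      ring
    simp only [hterm]
    exact Summable.tsum_const_smul _ ((hsum (z - 1)))
  have heq : ∀ z : ℤ, lam • b (z - 1) + (1 - lam) • b z = a z := by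
    intro z
    have hb1 : (1 - lam) • b z = S z := by
      rw [hbdef]; exact smul_inv_smul₀ (ne_of_gt hlam1) _
    have hb2 : lam • b (z - 1) = μ • S (z - 1) := by
      rw [hbdef]
      simp only
      rw [smul_smul]
      congr 1
    rw [hb1, hb2, hS z, neg_smul]
    abel
  refine ⟨b, ?_, heq⟩
  apply subexp_of_bound
  intro ε hε
  set ε' : ℝ := min ε ε₀ with hε'def
  have hε'0 : 0 < ε' := lt_min hε hε₀
  obtain ⟨C, hC1, hC⟩ := bound_of_subexp ha hε'0
  have hC' : ∀ w : ℤ, ‖a w‖ ≤ C * Real.exp (ε' * |(w : ℝ)|) := fun w =>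
    le_trans (le_add_of_nonneg_left zero_le_one) (hC w)
  have hkey := fun z : ℤ =>
    key_summable hμ0 (by linarith : (0:ℝ) < C) hε'0 (hratio ε' (min_le_right _ _)) hr1 hC' z
  refine ⟨(1 - lam)⁻¹ * (C / (1 - r)), ?_, fun z => ?_⟩
  · have h1r : (0:ℝ) < 1 - r := by linarith
    have hC0 : (0:ℝ) < C := by linarith
    positivity
  have h1 : ‖b z‖ = (1 - lam)⁻¹ * ‖S z‖ := by
    rw [hbdef]
    simp only
    rw [norm_smul, Real.norm_eq_abs, abs_of_pos (by positivity)]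
  have h2 : ‖S z‖ ≤ ∑' k : ℕ, μ ^ k * ‖a (z - k)‖ := by
    rw [hSdef]
    simp only
    calc ‖∑' k : ℕ, (-μ) ^ k • a (z - k)‖ ≤ ∑' k : ℕ, ‖(-μ) ^ k • a (z - k)‖ :=
          norm_tsum_le_tsum_norm (by simp only [hnorm]; exact hsumn z)
      _ = ∑' k : ℕ, μ ^ k * ‖a (z - k)‖ := tsum_congr (hnorm z)
  have h3 := (hkey z).2
  rw [h1]
  calc (1 - lam)⁻¹ * ‖S z‖ ≤ (1 - lam)⁻¹ * (C * Real.exp (ε' * |(z : ℝ)|) / (1 - r)) := by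
        gcongr
        exact le_trans h2 h3
    _ ≤ (1 - lam)⁻¹ * (C / (1 - r)) * Real.exp (ε * |(z : ℝ)|) := by
        have hinv : (0:ℝ) ≤ (1 - lam)⁻¹ := by positivity
        have h1r : (0:ℝ) < 1 - r := by linarith
        have hC0 : (0:ℝ) < C := by linarith
        rw [mul_assoc]
        apply mul_le_mul_of_nonneg_left ?_ hinv
        calc C * Real.exp (ε' * |(z : ℝ)|) / (1 - r)
            = C / (1 - r) * Real.exp (ε' * |(z : ℝ)|) := by ring
          _ ≤ C / (1 - r) * Real.exp (ε * |(z : ℝ)|) := by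
              have hEE : Real.exp (ε' * |(z:ℝ)|) ≤ Real.exp (ε * |(z:ℝ)|) :=
                Real.exp_le_exp.mpr (mul_le_mul_of_nonneg_right (min_le_left _ _) (abs_nonneg _))
              have hCr : (0:ℝ) ≤ C / (1 - r) := by positivity
              nlinarith

lemma zero_of_growth {t ν : ℝ} (ht : 0 ≤ t) (hν : 1 < ν)
    (h : ∀ ε : ℝ, 0 < ε → ∃ C : ℝ, 0 < C ∧ ∀ n : ℕ, ν ^ n * t ≤ C * Real.exp (ε * n)) :
    t = 0 := by
  by_contra ht0
  have htpos : 0 < t := lt_of_le_of_ne ht (Ne.symm ht0)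
  have hν0 : (0:ℝ) < ν := by linarith
  have hlog : 0 < Real.log ν := Real.log_pos hν
  obtain ⟨C, hC, hCn⟩ := h (Real.log ν / 2) (by positivity)
  set q : ℝ := Real.exp (Real.log ν / 2) / ν with hq
  have hq0 : 0 ≤ q := by positivity
  have hq1 : q < 1 := by
    rw [hq, div_lt_one hν0]
    calc Real.exp (Real.log ν / 2) < Real.exp (Real.log ν) := Real.exp_lt_exp.mpr (by linarith)
      _ = ν := Real.exp_log hν0
  have hbound : ∀ n : ℕ, t ≤ C * q ^ n := by
    intro n
    have h1 := hCn n
    have hνn : (0:ℝ) < ν ^ n := by positivity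
    have h2 : t ≤ C * Real.exp (Real.log ν / 2 * n) / ν ^ n := by
      rw [le_div_iff₀ hνn]
      linarith [h1]
    calc t ≤ C * Real.exp (Real.log ν / 2 * n) / ν ^ n := h2
      _ = C * q ^ n := by
        rw [hq, div_pow, ← Real.exp_nat_mul, mul_comm (n:ℝ) _, mul_div_assoc]
  have hlim : Tendsto (fun n : ℕ => C * q ^ n) atTop (𝓝 0) := by
    have := (tendsto_pow_atTop_nhds_zero_of_lt_one hq0 hq1).const_mul C
    simpa using this
  have hle : t ≤ 0 :=
    le_of_tendsto_of_tendsto' tendsto_const_nhds hlim hbound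
  linarith

lemma uniq_zero (lam : ℝ) (h0 : 0 < lam) (h1 : lam < 1) (hhalf : lam ≠ 1 / 2)
    (c : ℤ → EuclideanSpace ℝ (Fin d)) (hc : IsSubexponential c)
    (heq : ∀ z : ℤ, lam • c (z - 1) + (1 - lam) • c z = 0) :
    ∀ z : ℤ, c z = 0 := by
  have hlam1 : (0:ℝ) < 1 - lam := by linarith
  set μ := lam / (1 - lam) with hμdef
  have hμ0 : 0 < μ := by positivity
  have hμ1 : μ ≠ 1 := by
    rw [hμdef]
    intro h
    rw [div_eq_one_iff_eq (ne_of_gt hlam1)] at h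
    apply hhalf
    linarith
  have hstep : ∀ z : ℤ, ‖c z‖ = μ * ‖c (z - 1)‖ := by
    intro z
    have h := heq z
    have h2 : (1 - lam) • c z = -(lam • c (z - 1)) := by
      rw [eq_neg_iff_add_eq_zero, add_comm]
      exact h
    have h3 : c z = (-μ) • c (z - 1) := by
      calc c z = (1 - lam)⁻¹ • ((1 - lam) • c z) := (inv_smul_smul₀ (ne_of_gt hlam1) _).symm
        _ = (1 - lam)⁻¹ • (-(lam • c (z - 1))) := by rw [h2]
        _ = (-μ) • c (z - 1) := by
            rw [smul_neg, smul_smul, ← neg_smul]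
            congr 1
            rw [hμdef, div_eq_mul_inv, mul_comm]
    rw [h3, norm_smul, Real.norm_eq_abs, abs_neg, abs_of_pos hμ0]
  have hpos : ∀ n : ℕ, ‖c (n : ℤ)‖ = μ ^ n * ‖c 0‖ := by
    intro n
    induction n with
    | zero => simp
    | succ n ih =>
      have hs := hstep ((n : ℤ) + 1)
      rw [show ((n:ℤ) + 1) - 1 = (n:ℤ) by ring] at hs
      push_cast
      rw [hs, ih, pow_succ]
      ring
  have hneg : ∀ n : ℕ, ‖c 0‖ = μ ^ n * ‖c (-(n : ℤ))‖ := by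
    intro n
    induction n with
    | zero => simp
    | succ n ih =>
      have hs := hstep (-(n : ℤ))
      rw [show (-(n:ℤ)) - 1 = -((n:ℤ) + 1) by ring] at hs
      rw [ih, hs, pow_succ]
      push_cast
      ring
  have hc0 : ‖c 0‖ = 0 := by
    rcases lt_or_gt_of_ne hμ1 with hlt | hgt
    · -- μ < 1
      have hν : 1 < μ⁻¹ := (one_lt_inv₀ hμ0).mpr hlt
      apply zero_of_growth (norm_nonneg _) hν
      intro ε hε
      obtain ⟨C, hC1, hC⟩ := bound_of_subexp hc hε
      refine ⟨C, by linarith, fun n => ?_⟩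
      have h1 := hC (-(n : ℤ))
      have h3 : (μ⁻¹) ^ n * ‖c 0‖ = ‖c (-(n : ℤ))‖ := by
        rw [hneg n, ← mul_assoc, inv_pow, inv_mul_cancel₀ (pow_ne_zero _ (ne_of_gt hμ0)),
          one_mul]
      rw [h3]
      calc ‖c (-(n : ℤ))‖ ≤ 1 + ‖c (-(n : ℤ))‖ := by linarith [norm_nonneg (c (-(n:ℤ)))]
        _ ≤ C * Real.exp (ε * |((-(n : ℤ)) : ℝ)|) := by exact_mod_cast h1
        _ = C * Real.exp (ε * n) := by
            push_cast
            rw [abs_neg, abs_of_nonneg (by positivity : (0:ℝ) ≤ (n:ℝ))]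
    · -- μ > 1
      apply zero_of_growth (norm_nonneg _) hgt
      intro ε hε
      obtain ⟨C, hC1, hC⟩ := bound_of_subexp hc hε
      refine ⟨C, by linarith, fun n => ?_⟩
      have h1 := hC (n : ℤ)
      rw [← hpos n]
      calc ‖c (n : ℤ)‖ ≤ 1 + ‖c (n : ℤ)‖ := by linarith [norm_nonneg (c (n:ℤ))]
        _ ≤ C * Real.exp (ε * |((n : ℤ) : ℝ)|) := by exact_mod_cast h1
        _ = C * Real.exp (ε * n) := by
            push_cast
            rw [abs_of_nonneg (by positivity : (0:ℝ) ≤ (n:ℝ))]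
  intro z
  rcases Int.natAbs_eq z with hz | hz
  · rw [hz]
    have := hpos z.natAbs
    rw [hc0, mul_zero] at this
    exact norm_eq_zero.mp this
  · rw [hz]
    have := hneg z.natAbs
    rw [hc0] at this
    have hμn : μ ^ z.natAbs ≠ 0 := pow_ne_zero _ (ne_of_gt hμ0)
    have hzero : ‖c (-(z.natAbs : ℤ))‖ = 0 := by
      rcases mul_eq_zero.mp this.symm with h' | h'
      · exact absurd h' hμn
      · exact h'
    exact norm_eq_zero.mp hzero

lemma subexp_shift_neg {a : ℤ → EuclideanSpace ℝ (Fin d)} (m : ℤ) (ha : IsSubexponential a) :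
    IsSubexponential (fun z => a (m - z)) := by
  apply subexp_of_bound
  intro ε hε
  obtain ⟨C, hC1, hC⟩ := bound_of_subexp ha hε
  refine ⟨C * Real.exp (ε * |(m : ℝ)|), by positivity, fun z => ?_⟩
  calc ‖a (m - z)‖ ≤ C * Real.exp (ε * |((m - z : ℤ) : ℝ)|) :=
        le_trans (le_add_of_nonneg_left zero_le_one) (hC _)
    _ ≤ C * Real.exp (ε * (|(m : ℝ)| + |(z : ℝ)|)) := by
        gcongr
        push_cast
        exact abs_sub _ _
    _ = C * Real.exp (ε * |(m : ℝ)|) * Real.exp (ε * |(z : ℝ)|) := by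
        rw [mul_add, Real.exp_add, mul_assoc]

lemma subexp_sub {b b' : ℤ → EuclideanSpace ℝ (Fin d)}
    (hb : IsSubexponential b) (hb' : IsSubexponential b') :
    IsSubexponential (fun z => b z - b' z) := by
  apply subexp_of_bound
  intro ε hε
  obtain ⟨C1, hC11, hC1⟩ := bound_of_subexp hb hε
  obtain ⟨C2, hC21, hC2⟩ := bound_of_subexp hb' hε
  refine ⟨C1 + C2, by linarith, fun z => ?_⟩
  have h1 := hC1 z
  have h2 := hC2 z
  calc ‖b z - b' z‖ ≤ ‖b z‖ + ‖b' z‖ := norm_sub_le _ _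
    _ ≤ (C1 + C2) * Real.exp (ε * |(z : ℝ)|) := by
        rw [add_mul]
        linarith

end Stmt9Aux

/-- For `λ ∈ (0,1)`, `λ ≠ 1/2`, every subexponential sequence `(a_z)` admits exactly one
subexponential sequence `(b_z)` with `λ b_{z−1} + (1−λ) b_z = a_z` for all `z`. -/
theorem stmt_9 (d : ℕ) (hd : 1 ≤ d) (lam : ℝ)
    (h0 : 0 < lam) (h1 : lam < 1) (hhalf : lam ≠ 1 / 2) :
    ∀ a : ℤ → EuclideanSpace ℝ (Fin d), IsSubexponential a →
      ∃! b : ℤ → EuclideanSpace ℝ (Fin d),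
        IsSubexponential b ∧ ∀ z : ℤ, lam • b (z - 1) + (1 - lam) • b z = a z := by
  intro a ha
  have huniq : ∀ b b' : ℤ → EuclideanSpace ℝ (Fin d),
      (IsSubexponential b ∧ ∀ z : ℤ, lam • b (z - 1) + (1 - lam) • b z = a z) →
      (IsSubexponential b' ∧ ∀ z : ℤ, lam • b' (z - 1) + (1 - lam) • b' z = a z) →
      b = b' := by
    rintro b b' ⟨hb, hbe⟩ ⟨hb', hbe'⟩
    have hcsub := Stmt9Aux.subexp_sub hb hb'
    have hceq : ∀ z : ℤ, lam • (fun z => b z - b' z) (z - 1)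
        + (1 - lam) • (fun z => b z - b' z) z = 0 := by
      intro z
      simp only
      calc lam • (b (z - 1) - b' (z - 1)) + (1 - lam) • (b z - b' z)
          = (lam • b (z - 1) + (1 - lam) • b z) - (lam • b' (z - 1) + (1 - lam) • b' z) := by
            rw [smul_sub, smul_sub]; abel
        _ = a z - a z := by rw [hbe z, hbe' z]
        _ = 0 := sub_self _
    have hzero := Stmt9Aux.uniq_zero lam h0 h1 hhalf _ hcsub hceq
    funext z
    exact sub_eq_zero.mp (hzero z)
  rcases lt_or_gt_of_ne hhalf with hlt | hgt
  · obtain ⟨b, hb, hbe⟩ := Stmt9Aux.exists_sol lam h0 hlt a ha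
    exact ⟨b, ⟨hb, hbe⟩, fun b' hb' => huniq b' b hb' ⟨hb, hbe⟩⟩
  · have h0' : (0:ℝ) < 1 - lam := by linarith
    have h2' : 1 - lam < 1 / 2 := by linarith
    have ha' : IsSubexponential (fun z => a (1 - z)) := Stmt9Aux.subexp_shift_neg 1 ha
    obtain ⟨b', hb', hbe'⟩ := Stmt9Aux.exists_sol (1 - lam) h0' h2' _ ha'
    have hbsub : IsSubexponential (fun z => b' (-z)) := by
      have := Stmt9Aux.subexp_shift_neg 0 hb'
      simpa only [zero_sub] using this
    have hbeq : ∀ z : ℤ, lam • b' (-(z - 1)) + (1 - lam) • b' (-z) = a z := by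
      intro z
      have h := hbe' (1 - z)
      rw [show (1 - z) - 1 = -z by ring, show (1:ℝ) - (1 - lam) = lam by ring,
        show (1:ℤ) - (1 - z) = z by ring] at h
      rw [show -(z - 1) = 1 - z by ring, add_comm]
      exact h
    exact ⟨fun z => b' (-z), ⟨hbsub, hbeq⟩, fun b'' hb'' =>
      huniq b'' (fun z => b' (-z)) hb'' ⟨hbsub, hbeq⟩⟩
end
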